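/- arXiv:2204.03292 — 11 statements merged into one kernel-verified Lean document; each statement's English description precedes it below -/
import Mathlib

section
/- There exist constants C > 0 and K ∈ ℕ such that for every integer k ≥ K there is a unique real number μ_k in the interval (π(k − 1/2) − 1/2, π(k − 1/2) + 1/2) satisfying cosh(μ_k)·cos(μ_k) + 1 = 0, and this root satisfies |μ_k − π(k − 1/2)| ≤ C·e^{−π(k − 1/2)}. -/
open Real

private lemma beam_aux_mono (a : ℝ) (ha : 4 ≤ a) :
    StrictMonoOn (fun t => Real.cosh (a + t) * Real.sin t) (Set.Icc (-(1/2) : ℝ) (1/2)) := by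
  apply strictMonoOn_of_deriv_pos (convex_Icc _ _)
  · exact ((Real.continuous_cosh.comp (continuous_const.add continuous_id)).mul
      Real.continuous_sin).continuousOn
  · intro t ht
    rw [interior_Icc] at ht
    obtain ⟨ht1, ht2⟩ := ht
    have h1 : HasDerivAt (fun t : ℝ => Real.cosh (a + t)) (Real.sinh (a + t)) t := by
      exact ((Real.hasDerivAt_cosh (a + t)).comp t ((hasDerivAt_id t).const_add a)).congr_deriv (by simp)
    have h2 := h1.mul (Real.hasDerivAt_sin t)
    rw [HasDerivAt.deriv (f := fun t => Real.cosh (a + t) * Real.sin t) h2]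
    have hcos : (7:ℝ)/8 ≤ Real.cos t := by
      have := Real.one_sub_sq_div_two_le_cos (x := t)
      nlinarith
    have hsin : |Real.sin t| ≤ 1/2 := by
      have h := Real.abs_sin_le_abs (x := t)
      have : |t| ≤ 1/2 := abs_le.mpr ⟨by linarith, by linarith⟩
      linarith
    have hsinh0 : 0 ≤ Real.sinh (a + t) := by
      rw [Real.sinh_eq]
      have := Real.exp_le_exp.mpr (show -(a+t) ≤ a+t by linarith)
      linarith
    have hsc : Real.sinh (a + t) ≤ Real.cosh (a + t) := by
      rw [Real.sinh_eq, Real.cosh_eq]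
      have := Real.exp_pos (-(a + t))
      linarith
    have hch : 0 < Real.cosh (a + t) := Real.cosh_pos _
    have habs := abs_le.mp hsin
    nlinarith
set_option maxHeartbeats 1000000 in
/-- There exist constants `C > 0` and `K ∈ ℕ` such that for every integer `k ≥ K` there is a
unique real number `μ` in the interval `(π(k − 1/2) − 1/2, π(k − 1/2) + 1/2)` satisfying
`cosh μ · cos μ + 1 = 0`, and this root satisfies `|μ − π(k − 1/2)| ≤ C·e^{−π(k − 1/2)}`. -/
theorem beam_characteristic_roots_asymptotics :
    ∃ C > (0:ℝ), ∃ K : ℕ, ∀ k : ℕ, K ≤ k →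
      (∃! μ : ℝ, μ ∈ Set.Ioo (π * ((k:ℝ) - 1/2) - 1/2) (π * ((k:ℝ) - 1/2) + 1/2) ∧
          Real.cosh μ * Real.cos μ + 1 = 0) ∧
      (∀ μ : ℝ, μ ∈ Set.Ioo (π * ((k:ℝ) - 1/2) - 1/2) (π * ((k:ℝ) - 1/2) + 1/2) →
          Real.cosh μ * Real.cos μ + 1 = 0 →
          |μ - π * ((k:ℝ) - 1/2)| ≤ C * Real.exp (-(π * ((k:ℝ) - 1/2)))) := by
  refine ⟨4 * Real.exp (1/2), by positivity, 2, fun k hk => ?_⟩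
  set a : ℝ := π * ((k:ℝ) - 1/2) with ha_def
  have hπ : (3:ℝ) < π := Real.pi_gt_three
  have hk2 : (2:ℝ) ≤ (k:ℝ) := by exact_mod_cast hk
  have ha : 4 ≤ a := by
    have h1 : (3:ℝ) * (3/2) ≤ π * ((k:ℝ) - 1/2) :=
      mul_le_mul (le_of_lt hπ) (by linarith) (by norm_num) (by linarith)
    rw [ha_def]; linarith
  obtain ⟨s, hs1, hcos⟩ : ∃ s : ℝ, (s = 1 ∨ s = -1) ∧
      ∀ t : ℝ, Real.cos (a + t) = s * Real.sin t := by
    refine ⟨(-1 : ℝ) ^ k, k.even_or_odd.imp Even.neg_one_pow Odd.neg_one_pow, fun t => ?_⟩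
    have heq : a + t = (k : ℝ) * π - (π/2 - t) := by rw [ha_def]; push_cast; ring
    rw [heq, Real.cos_nat_mul_pi_sub, Real.cos_pi_div_two_sub]
  set H : ℝ → ℝ := fun t => Real.cosh (a + t) * Real.sin t with hH_def
  have hsabs : |s| = 1 := by rcases hs1 with h | h <;> rw [h] <;> norm_num
  -- equivalence between the equation and H (μ - a) = -s
  have hiff : ∀ μ : ℝ, (Real.cosh μ * Real.cos μ + 1 = 0) ↔ H (μ - a) = -s := by
    intro μ
    have h1 : Real.cos μ = s * Real.sin (μ - a) := by
      have := hcos (μ - a); rwa [add_sub_cancel] at this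
    have h2 : H (μ - a) = Real.cosh μ * Real.sin (μ - a) := by
      rw [hH_def]; simp [add_sub_cancel]
    rw [h1, h2]
    rcases hs1 with h | h <;> rw [h] <;> constructor <;> intro hh <;> nlinarith [hh]
  -- monotonicity
  have hmono := beam_aux_mono a ha
  -- endpoint values
  have hsin12 : (15:ℝ)/32 ≤ Real.sin (1/2) := by
    have := Real.sin_gt_sub_cube (x := 1/2) (by norm_num)
    nlinarith
  have hcosh_ge : ∀ x : ℝ, Real.exp x / 2 ≤ Real.cosh x := by
    intro x
    rw [Real.cosh_eq]
    have := Real.exp_pos (-x)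
    linarith
  have hexp_ge : ∀ x : ℝ, (7:ℝ)/2 ≤ x → (9:ℝ)/2 ≤ Real.exp x := by
    intro x hx
    have := Real.add_one_le_exp x
    linarith
  have hHneg : H (-(1/2)) < -1 := by
    rw [hH_def]
    simp only [Real.sin_neg]
    have h1 : Real.exp (a + -(1/2)) / 2 ≤ Real.cosh (a + -(1/2)) := hcosh_ge _
    have h2 : (9:ℝ)/2 ≤ Real.exp (a + -(1/2)) := hexp_ge _ (by linarith)
    have h3 : (9:ℝ)/4 ≤ Real.cosh (a + -(1/2)) := by linarith
    nlinarith [mul_le_mul h3 hsin12 (by norm_num) (by linarith : (0:ℝ) ≤ Real.cosh (a + -(1/2)))]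
  have hHpos : (1:ℝ) < H (1/2) := by
    rw [hH_def]
    have h1 : Real.exp (a + 1/2) / 2 ≤ Real.cosh (a + 1/2) := hcosh_ge _
    have h2 : (9:ℝ)/2 ≤ Real.exp (a + 1/2) := hexp_ge _ (by linarith)
    have h3 : (9:ℝ)/4 ≤ Real.cosh (a + 1/2) := by linarith
    nlinarith [mul_le_mul h3 hsin12 (by norm_num) (by linarith : (0:ℝ) ≤ Real.cosh (a + 1/2))]
  have hs_le : -s ∈ Set.Ioo (H (-(1/2))) (H (1/2)) := by
    have h1 := abs_le.mp hsabs.le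
    exact ⟨by linarith, by linarith⟩
  -- existence via IVT
  have hcont : ContinuousOn H (Set.Icc (-(1/2) : ℝ) (1/2)) :=
    ((Real.continuous_cosh.comp (continuous_const.add continuous_id)).mul
      Real.continuous_sin).continuousOn
  obtain ⟨t0, ht0mem, ht0⟩ := intermediate_value_Ioo (by norm_num : (-(1/2):ℝ) ≤ 1/2) hcont hs_le
  refine ⟨?_, ?_⟩
  · refine ⟨a + t0, ⟨⟨by linarith [ht0mem.1], by linarith [ht0mem.2]⟩, ?_⟩, ?_⟩
    · rw [hiff]; simpa using ht0
    · rintro μ ⟨hμmem, hμeq⟩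
      have hμt : H (μ - a) = -s := (hiff μ).mp hμeq
      have hmem1 : μ - a ∈ Set.Icc (-(1/2) : ℝ) (1/2) :=
        ⟨by linarith [hμmem.1], by linarith [hμmem.2]⟩
      have hmem2 : t0 ∈ Set.Icc (-(1/2) : ℝ) (1/2) :=
        ⟨ht0mem.1.le, ht0mem.2.le⟩
      have : μ - a = t0 := hmono.injOn hmem1 hmem2 (hμt.trans ht0.symm)
      linarith
  · -- the bound
    intro μ hμmem hμeq
    have hμt : H (μ - a) = -s := (hiff μ).mp hμeq
    have ht1 : -(1/2) < μ - a := by linarith [hμmem.1]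
    have ht2 : μ - a < 1/2 := by linarith [hμmem.2]
    generalize ht_def : μ - a = t at *
    clear hiff hmono hcont hs_le hHneg hHpos hcos hμeq hμmem ht0 ht0mem hs1
    have hch : 0 < Real.cosh (a + t) := Real.cosh_pos _
    have habsH : Real.cosh (a + t) * |Real.sin t| = 1 := by
      have h : |H t| = 1 := by rw [hμt, abs_neg, hsabs]
      rw [hH_def] at h
      rwa [abs_mul, abs_of_pos hch] at h
    have hE : 0 < Real.exp (a - 1/2) := Real.exp_pos _
    have hexpmono : Real.exp (a - 1/2) ≤ Real.exp (a + t) := Real.exp_le_exp.mpr (by linarith)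
    have h1 : Real.exp (a - 1/2) / 2 * |Real.sin t| ≤ 1 := by
      calc Real.exp (a - 1/2) / 2 * |Real.sin t|
          ≤ Real.cosh (a + t) * |Real.sin t| := by
            apply mul_le_mul_of_nonneg_right _ (abs_nonneg _)
            calc Real.exp (a - 1/2) / 2 ≤ Real.exp (a + t) / 2 := by linarith
              _ ≤ Real.cosh (a + t) := hcosh_ge _
        _ = 1 := habsH
    have hsin_le : |Real.sin t| ≤ 2 * Real.exp (1/2 - a) := by
      have hinv : Real.exp (1/2 - a) = 1 / Real.exp (a - 1/2) := by
        rw [eq_div_iff (ne_of_gt hE), ← Real.exp_add]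
        norm_num
      rw [hinv, mul_one_div, le_div_iff₀ hE]
      nlinarith [abs_nonneg (Real.sin t), h1]
    -- |t| ≤ 2 * |sin t|
    have ht_sin : |t| ≤ 2 * |Real.sin t| := by
      rcases lt_trichotomy t 0 with h | h | h
      · have hpos : 0 < -t := by linarith
        have hc := Real.sin_gt_sub_cube hpos
        rw [Real.sin_neg] at hc
        have hu2 : (-t)^2 < 1/4 := by nlinarith
        have hcube : (-t)^3 ≤ (-t)/4 := by nlinarith [mul_lt_mul_of_pos_left hu2 hpos]
        have hsneg : Real.sin t < 0 := by nlinarith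
        rw [abs_of_neg h, abs_of_neg hsneg]
        nlinarith
      · simp [h]
      · have hc := Real.sin_gt_sub_cube h
        have hu2 : t^2 < 1/4 := by nlinarith
        have hcube : t^3 ≤ t/4 := by nlinarith [mul_lt_mul_of_pos_left hu2 h]
        have hspos : 0 < Real.sin t := by nlinarith
        rw [abs_of_pos h, abs_of_pos hspos]
        nlinarith
    have hfinal : |t| ≤ 4 * Real.exp (1/2 - a) := by linarith
    have hEmul : 4 * Real.exp (1/2) * Real.exp (-a) = 4 * Real.exp (1/2 - a) := by
      rw [mul_assoc, ← Real.exp_add, ← sub_eq_add_neg]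
    rw [hEmul]
    exact hfinal
end

section
/- For μ > 0 define f_μ, g_μ : [0,1] → ℝ by f_μ(ξ) = (cosh μ + cos μ)(cosh(μξ) − cos(μξ)) − (sinh μ − sin μ)(sinh(μξ) − sin(μξ)) and g_μ(ξ) = (cosh μ + cos μ)(cosh(μξ) + cos(μξ)) − (sinh μ − sin μ)(sinh(μξ) + sin(μξ)). Then for every ε > 0 there exists M > 0 such that for every μ ≥ M with cosh(μ)cos(μ) + 1 = 0 one has ‖f_μ‖_{L²(0,1)} > 0 and | ‖g_μ‖_{L²(0,1)} / ‖f_μ‖_{L²(0,1)} − 1 | < ε. In particular the ratio of L² norms tends to 1 along the positive roots of cosh(μ)cos(μ) + 1 = 0 as μ → ∞. -/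
/-- The first eigenvector component of the clamped-free Euler–Bernoulli beam. -/
noncomputable def fEig (μ ξ : ℝ) : ℝ :=
  (Real.cosh μ + Real.cos μ) * (Real.cosh (μ * ξ) - Real.cos (μ * ξ)) -
    (Real.sinh μ - Real.sin μ) * (Real.sinh (μ * ξ) - Real.sin (μ * ξ))

/-- The second eigenvector component of the clamped-free Euler–Bernoulli beam. -/
noncomputable def gEig (μ ξ : ℝ) : ℝ :=
  (Real.cosh μ + Real.cos μ) * (Real.cosh (μ * ξ) + Real.cos (μ * ξ)) -
    (Real.sinh μ - Real.sin μ) * (Real.sinh (μ * ξ) + Real.sin (μ * ξ))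

/-- The `L²(0,1)` norm of a real function on the unit interval. -/
noncomputable def l2Norm01 (h : ℝ → ℝ) : ℝ :=
  Real.sqrt (∫ ξ in (0:ℝ)..1, (h ξ) ^ 2)

lemma contII {f : ℝ → ℝ} (h : Continuous f) (a b : ℝ) :
    IntervalIntegrable f MeasureTheory.volume a b :=
  h.intervalIntegrable a b

lemma fEig_continuous (μ : ℝ) : Continuous (fEig μ) := by
  unfold fEig; fun_prop

lemma gEig_continuous (μ : ℝ) : Continuous (gEig μ) := by
  unfold gEig; fun_prop

/-- Antiderivative of `gEig² - fEig²`. -/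
noncomputable def Hanti (μ ξ : ℝ) : ℝ :=
  (2 / μ) * ((Real.cosh μ + Real.cos μ)^2 *
      (Real.sin (μ*ξ) * Real.cosh (μ*ξ) + Real.cos (μ*ξ) * Real.sinh (μ*ξ))
    - 2 * (Real.cosh μ + Real.cos μ) * (Real.sinh μ - Real.sin μ) *
      (Real.sin (μ*ξ) * Real.sinh (μ*ξ))
    + (Real.sinh μ - Real.sin μ)^2 *
      (Real.sin (μ*ξ) * Real.cosh (μ*ξ) - Real.cos (μ*ξ) * Real.sinh (μ*ξ)))

lemma Hanti_hasDerivAt (μ : ℝ) (hμ : μ ≠ 0) (ξ : ℝ) :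
    HasDerivAt (Hanti μ) ((gEig μ ξ)^2 - (fEig μ ξ)^2) ξ := by
  have hlin : HasDerivAt (fun ξ : ℝ => μ * ξ) μ ξ := by
    simpa using (hasDerivAt_id ξ).const_mul μ
  have hs : HasDerivAt (fun ξ : ℝ => Real.sin (μ*ξ)) (Real.cos (μ*ξ) * μ) ξ :=
    (Real.hasDerivAt_sin (μ*ξ)).comp ξ hlin
  have hc : HasDerivAt (fun ξ : ℝ => Real.cos (μ*ξ)) (-Real.sin (μ*ξ) * μ) ξ :=
    (Real.hasDerivAt_cos (μ*ξ)).comp ξ hlin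
  have hsh : HasDerivAt (fun ξ : ℝ => Real.sinh (μ*ξ)) (Real.cosh (μ*ξ) * μ) ξ :=
    (Real.hasDerivAt_sinh (μ*ξ)).comp ξ hlin
  have hch : HasDerivAt (fun ξ : ℝ => Real.cosh (μ*ξ)) (Real.sinh (μ*ξ) * μ) ξ :=
    (Real.hasDerivAt_cosh (μ*ξ)).comp ξ hlin
  have h := ((((hs.mul hch).add (hc.mul hsh)).const_mul ((Real.cosh μ + Real.cos μ)^2)).add
      (((hs.mul hsh).const_mul
        (-(2 * (Real.cosh μ + Real.cos μ) * (Real.sinh μ - Real.sin μ)))).add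
      (((hs.mul hch).sub (hc.mul hsh)).const_mul ((Real.sinh μ - Real.sin μ)^2)))).const_mul
      (2 / μ)
  refine (h.congr_deriv ?_).congr_of_eventuallyEq (Filter.Eventually.of_forall fun x => ?_)
  · unfold fEig gEig; field_simp; ring
  · unfold Hanti; simp only [Pi.mul_apply, Pi.add_apply, Pi.sub_apply]; ring

lemma integral_sq_eq (μ : ℝ) (hμ : μ ≠ 0)
    (hroot : Real.cosh μ * Real.cos μ + 1 = 0) :
    ∫ ξ in (0:ℝ)..1, (gEig μ ξ)^2 = ∫ ξ in (0:ℝ)..1, (fEig μ ξ)^2 := by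
  have hint : ∫ ξ in (0:ℝ)..1, ((gEig μ ξ)^2 - (fEig μ ξ)^2) = Hanti μ 1 - Hanti μ 0 :=
    intervalIntegral.integral_eq_sub_of_hasDerivAt
      (fun x _ => Hanti_hasDerivAt μ hμ x)
      (contII (((gEig_continuous μ).pow 2).sub ((fEig_continuous μ).pow 2)) 0 1)
  have h0 : Hanti μ 0 = 0 := by simp [Hanti]
  have h1 : Hanti μ 1 = 0 := by
    unfold Hanti
    rw [mul_one]
    have e1 := Real.cosh_sq_sub_sinh_sq μ
    have e2 := Real.sin_sq_add_cos_sq μ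
    have : (Real.cosh μ + Real.cos μ)^2 *
      (Real.sin μ * Real.cosh μ + Real.cos μ * Real.sinh μ)
    - 2 * (Real.cosh μ + Real.cos μ) * (Real.sinh μ - Real.sin μ) *
      (Real.sin μ * Real.sinh μ)
    + (Real.sinh μ - Real.sin μ)^2 *
      (Real.sin μ * Real.cosh μ - Real.cos μ * Real.sinh μ) = 0 := by
      linear_combination (2 * (Real.sin μ * Real.cosh μ + Real.cos μ * Real.sinh μ)) * hroot
        + (Real.sin μ * Real.cosh μ + Real.cos μ * Real.sinh μ) * e1
        + (Real.sin μ * Real.cosh μ + Real.cos μ * Real.sinh μ) * e2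
    rw [this, mul_zero]
  have hsub : ∫ ξ in (0:ℝ)..1, ((gEig μ ξ)^2 - (fEig μ ξ)^2)
      = (∫ ξ in (0:ℝ)..1, (gEig μ ξ)^2) - ∫ ξ in (0:ℝ)..1, (fEig μ ξ)^2 :=
    intervalIntegral.integral_sub (contII ((gEig_continuous μ).pow 2) 0 1)
      (contII ((fEig_continuous μ).pow 2) 0 1)
  have := hint
  rw [hsub, h0, h1] at this
  linarith

lemma fEig_one (μ : ℝ) : fEig μ 1 = 2 * Real.sinh μ * Real.sin μ := by
  unfold fEig
  rw [mul_one]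
  linear_combination Real.cosh_sq_sub_sinh_sq μ - Real.sin_sq_add_cos_sq μ

lemma integral_f_pos (μ : ℝ) (hμ : 1 ≤ μ)
    (hroot : Real.cosh μ * Real.cos μ + 1 = 0) :
    0 < ∫ ξ in (0:ℝ)..1, (fEig μ ξ)^2 := by
  have hcosh : 1 < Real.cosh μ := by
    have := Real.one_lt_cosh.mpr (by positivity : μ ≠ 0)
    linarith
  have hsin : Real.sin μ ≠ 0 := by
    intro h
    have e2 := Real.sin_sq_add_cos_sq μ
    rw [h] at e2
    have hcos2 : Real.cos μ ^ 2 = 1 := by linarith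
    have h3 : Real.cosh μ ^ 2 * Real.cos μ ^ 2 = 1 := by nlinarith [hroot]
    rw [hcos2, mul_one] at h3
    nlinarith [h3, hcosh]
  have hsinh : 0 < Real.sinh μ := by
    have h0 : Real.sinh 0 < Real.sinh μ := Real.sinh_lt_sinh.mpr (by linarith)
    simpa using h0
  have hf1 : 0 < (fEig μ 1)^2 := by
    rw [fEig_one]
    positivity
  -- continuity at 1 gives positivity on a left neighborhood
  have hcont : ContinuousAt (fun x => (fEig μ x)^2) 1 :=
    ((fEig_continuous μ).pow 2).continuousAt
  have hev : ∀ᶠ x in nhds (1:ℝ), 0 < (fEig μ x)^2 :=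
    hcont.eventually (eventually_gt_nhds hf1)
  obtain ⟨δ, hδ, hball⟩ := Metric.eventually_nhds_iff.mp hev
  set c : ℝ := max (1 - δ/2) (1/2) with hc
  have hc1 : c < 1 := by
    apply max_lt <;> [linarith; norm_num]
  have hc0 : 0 ≤ c := le_trans (by norm_num) (le_max_right _ _)
  have hpos : ∀ x ∈ Set.Ioo c 1, 0 < (fEig μ x)^2 := by
    intro x hx
    apply hball
    have h1 : 1 - δ/2 ≤ c := le_max_left _ _
    rw [Real.dist_eq, abs_sub_lt_iff]
    constructor <;> [linarith [hx.2]; linarith [hx.1]]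
  have hi1 : (0:ℝ) ≤ ∫ ξ in (0:ℝ)..c, (fEig μ ξ)^2 :=
    intervalIntegral.integral_nonneg hc0 (fun x _ => sq_nonneg _)
  have hi2 : (0:ℝ) < ∫ ξ in c..1, (fEig μ ξ)^2 :=
    intervalIntegral.intervalIntegral_pos_of_pos_on
      (contII ((fEig_continuous μ).pow 2) c 1) hpos hc1
  have hadd : (∫ ξ in (0:ℝ)..c, (fEig μ ξ)^2) + ∫ ξ in c..1, (fEig μ ξ)^2
      = ∫ ξ in (0:ℝ)..1, (fEig μ ξ)^2 :=
    intervalIntegral.integral_add_adjacent_intervals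
      (contII ((fEig_continuous μ).pow 2) 0 c)
      (contII ((fEig_continuous μ).pow 2) c 1)
  linarith

/-- For every `ε > 0` there exists `M > 0` such that for every root `μ ≥ M` of
`cosh(μ)cos(μ) + 1 = 0` one has `‖f_μ‖ > 0` and `|‖g_μ‖/‖f_μ‖ − 1| < ε`:
the ratio of `L²` norms of the eigenvector components tends to `1`. -/
theorem beam_eigenvector_norm_ratio_tendsto_one :
    ∀ ε > (0:ℝ), ∃ M > (0:ℝ), ∀ μ : ℝ, M ≤ μ →
      Real.cosh μ * Real.cos μ + 1 = 0 →
      0 < l2Norm01 (fEig μ) ∧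
      |l2Norm01 (gEig μ) / l2Norm01 (fEig μ) - 1| < ε := by
  intro ε hε
  refine ⟨1, one_pos, fun μ hμ hroot => ?_⟩
  have hμ0 : μ ≠ 0 := by linarith
  have hfpos := integral_f_pos μ hμ hroot
  have hnorm : 0 < l2Norm01 (fEig μ) := Real.sqrt_pos.mpr hfpos
  refine ⟨hnorm, ?_⟩
  have heq : l2Norm01 (gEig μ) = l2Norm01 (fEig μ) := by
    unfold l2Norm01
    rw [integral_sq_eq μ hμ0 hroot]
  rw [heq, div_self (ne_of_gt hnorm)]
  simpa using hε
end

section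
/- Let β, κ > 0 and let (μ_k)_{k≥1} be the strictly increasing enumeration of the positive solutions of cosh(μ)cos(μ) + 1 = 0, and set λ_k = √(κ/β)·μ_k². Then λ_{k+1} − λ_k → ∞ as k → ∞, and consequently inf{ |λ_j − λ_k| : j, k ≥ 1, j ≠ k } > 0. -/
open Real Filter Set

private lemma cosh_two_gt : (3.5 : ℝ) < Real.cosh 2 := by
  have h1 : (2.7 : ℝ) < Real.exp 1 := by
    have := Real.exp_one_gt_d9; linarith
  have h2 : Real.exp 2 = Real.exp 1 * Real.exp 1 := by
    rw [← Real.exp_add]; norm_num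
  have h3 : (7 : ℝ) < Real.exp 2 := by nlinarith
  have h4 := Real.cosh_eq 2
  have h5 := Real.exp_pos (-2 : ℝ)
  rw [h4]; linarith

private lemma abs_cos_sub_cos_le (a b : ℝ) : |Real.cos a - Real.cos b| ≤ |a - b| := by
  rw [Real.cos_sub_cos]
  have h1 := Real.abs_sin_le_one ((a + b) / 2)
  have h2 := Real.abs_sin_le_abs (x := (a - b) / 2)
  calc |(-2) * Real.sin ((a + b) / 2) * Real.sin ((a - b) / 2)|
      = 2 * |Real.sin ((a + b) / 2)| * |Real.sin ((a - b) / 2)| := by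
        rw [abs_mul, abs_mul]; norm_num
    _ ≤ 2 * 1 * |(a - b) / 2| := by
        apply mul_le_mul _ h2 (abs_nonneg _) (by norm_num)
        nlinarith [abs_nonneg (Real.sin ((a + b) / 2))]
    _ = |a - b| := by rw [abs_div, abs_two]; ring

set_option maxHeartbeats 1000000 in
/-- Two roots of `cosh·cos + 1` with the smaller one at least `2` are at least `1/2` apart. -/
private lemma root_gap {x y : ℝ} (hx2 : 2 ≤ x) (hxy : x < y)
    (hx : Real.cosh x * Real.cos x + 1 = 0)
    (hy : Real.cosh y * Real.cos y + 1 = 0) : 1 / 2 ≤ y - x := by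
  by_contra hcon
  push_neg at hcon
  have hcx : Real.cos x = -(Real.cosh x)⁻¹ := by
    field_simp
    linarith [hx, Real.cosh_pos x]
  have hcy : Real.cos y = -(Real.cosh y)⁻¹ := by
    field_simp
    linarith [hy, Real.cosh_pos y]
  -- MVT for cos
  obtain ⟨ξ, hξ, hξeq⟩ := exists_hasDerivAt_eq_slope Real.cos (fun t => -Real.sin t) hxy
    Real.continuous_cos.continuousOn (fun t _ => Real.hasDerivAt_cos t)
  -- MVT for sech
  obtain ⟨ζ, hζ, hζeq⟩ := exists_hasDerivAt_eq_slope (fun t => (Real.cosh t)⁻¹)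
    (fun t => -Real.sinh t / Real.cosh t ^ 2) hxy
    (Real.continuous_cosh.inv₀ (fun t => (Real.cosh_pos t).ne')).continuousOn
    (fun t _ => (Real.hasDerivAt_cosh t).inv (Real.cosh_pos t).ne')
  -- relate the two slopes
  have hslope : -Real.sin ξ = Real.sinh ζ / Real.cosh ζ ^ 2 := by
    rw [hξeq]
    have : Real.cos y - Real.cos x = -((Real.cosh y)⁻¹ - (Real.cosh x)⁻¹) := by
      rw [hcx, hcy]; ring
    rw [this, neg_div, ← hζeq]; ring
  -- bounds on cosh at ζ and x
  have hcoshx : Real.cosh 2 ≤ Real.cosh x := by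
    rw [Real.cosh_le_cosh]
    rw [abs_of_nonneg (by norm_num : (0:ℝ) ≤ 2), abs_of_nonneg (by linarith)]
    exact hx2
  have hcoshζ : Real.cosh 2 ≤ Real.cosh ζ := by
    rw [Real.cosh_le_cosh]
    rw [abs_of_nonneg (by norm_num : (0:ℝ) ≤ 2), abs_of_nonneg (by nlinarith [hζ.1])]
    nlinarith [hζ.1]
  have hc2 := cosh_two_gt
  have hcoshζpos := Real.cosh_pos ζ
  -- |sin ξ| is small
  have hsinh := Real.sinh_lt_cosh (x := ζ)
  have hsinhpos : 0 < Real.sinh ζ := by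
    rw [Real.sinh_pos_iff]; nlinarith [hζ.1]
  have hsin_small : |Real.sin ξ| ≤ 2 / 7 := by
    rw [show Real.sin ξ = -(Real.sinh ζ / Real.cosh ζ ^ 2) by linarith [hslope], abs_neg,
      abs_of_pos (by positivity)]
    rw [div_le_iff₀ (by positivity)]
    nlinarith [hsinh.le, hcoshζ, hc2, hcoshζpos]
  -- |cos ξ| is not too close to 1
  have hcosx_small : |Real.cos x| ≤ 2 / 7 := by
    rw [hcx, abs_neg, abs_of_pos (by positivity)]
    rw [show (2:ℝ)/7 = ((7:ℝ)/2)⁻¹ by norm_num, inv_le_inv₀ (by linarith) (by norm_num)]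
    linarith
  have hcosξ : |Real.cos ξ| ≤ 2 / 7 + 1 / 2 := by
    calc |Real.cos ξ| ≤ |Real.cos ξ - Real.cos x| + |Real.cos x| := by
          simpa using abs_add_le (Real.cos ξ - Real.cos x) (Real.cos x)
      _ ≤ |ξ - x| + 2 / 7 := add_le_add (_root_.abs_cos_sub_cos_le ξ x) hcosx_small
      _ ≤ 2 / 7 + 1 / 2 := by
          rw [abs_of_nonneg (by linarith [hξ.1])]
          have := hξ.2
          linarith
  -- contradiction with sin² + cos² = 1
  have hpyth := Real.sin_sq_add_cos_sq ξ
  have h1 : Real.sin ξ ^ 2 ≤ ((2:ℝ) / 7) ^ 2 := by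
    nlinarith [abs_nonneg (Real.sin ξ), sq_abs (Real.sin ξ)]
  have h2 : Real.cos ξ ^ 2 ≤ ((2:ℝ) / 7 + 1 / 2) ^ 2 := by
    nlinarith [abs_nonneg (Real.cos ξ), sq_abs (Real.cos ξ)]
  nlinarith

/-- If `(μ_k)` is the strictly increasing enumeration of the positive solutions of
`cosh(μ)cos(μ) + 1 = 0` and `λ_k = √(κ/β)·μ_k²`, then `λ_{k+1} − λ_k → ∞` and the
infimum of the mutual gaps `|λ_j − λ_k|`, `j ≠ k`, is positive. -/
theorem beam_spectral_gap (β κ : ℝ) (hβ : 0 < β) (hκ : 0 < κ)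
    (μ : ℕ → ℝ) (hmono : StrictMono μ)
    (hroot : ∀ k : ℕ, 0 < μ k ∧ Real.cosh (μ k) * Real.cos (μ k) + 1 = 0)
    (hsurj : ∀ x : ℝ, 0 < x → Real.cosh x * Real.cos x + 1 = 0 → ∃ k : ℕ, μ k = x)
    (lam : ℕ → ℝ) (hlam : ∀ k : ℕ, lam k = Real.sqrt (κ / β) * (μ k) ^ 2) :
    Filter.Tendsto (fun k : ℕ => lam (k + 1) - lam k) Filter.atTop Filter.atTop ∧
    0 < sInf {d : ℝ | ∃ j k : ℕ, j ≠ k ∧ d = |lam j - lam k|} := by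
  set c := Real.sqrt (κ / β) with hc
  have hcpos : 0 < c := Real.sqrt_pos.mpr (div_pos hκ hβ)
  -- μ tends to infinity
  have hμtop : Tendsto μ atTop atTop := by
    rcases tendsto_of_monotone hmono.monotone with h | ⟨L, hL⟩
    · exact h
    exfalso
    have hlim : Real.cosh L * Real.cos L + 1 = 0 := by
      have h1 : Tendsto (fun k => Real.cosh (μ k) * Real.cos (μ k) + 1) atTop
          (nhds (Real.cosh L * Real.cos L + 1)) :=
        (((Real.continuous_cosh.tendsto L).comp hL).mul
          ((Real.continuous_cos.tendsto L).comp hL)).add tendsto_const_nhds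
      have h0 : Tendsto (fun k => Real.cosh (μ k) * Real.cos (μ k) + 1) atTop (nhds 0) := by
        simpa [(hroot _).2] using (tendsto_const_nhds : Tendsto (fun _ : ℕ => (0:ℝ)) atTop _)
      exact tendsto_nhds_unique h1 h0
    have hle := hmono.monotone.ge_of_tendsto hL
    have hL0 : 0 < L := lt_of_lt_of_le (hroot 0).1 (hle 0)
    obtain ⟨n, hn⟩ := hsurj L hL0 hlim
    have : μ n < L := lt_of_lt_of_le (hmono (Nat.lt_succ_self n)) (hle (n + 1))
    linarith [hn ▸ this]
  -- eventual lower bound on consecutive lam-gaps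
  have hkey : ∀ᶠ k in atTop, c * μ k ≤ lam (k + 1) - lam k := by
    filter_upwards [hμtop.eventually_ge_atTop 2] with k hk2
    have hgap : 1 / 2 ≤ μ (k + 1) - μ k :=
      root_gap hk2 (hmono (Nat.lt_succ_self k)) (hroot k).2 (hroot (k + 1)).2
    have hpos := (hroot k).1
    rw [hlam, hlam]
    have hlt := hmono (Nat.lt_succ_self k)
    have hD : μ k ≤ (μ (k + 1) - μ k) * (μ (k + 1) + μ k) := by nlinarith
    have hmul := mul_le_mul_of_nonneg_left hD hcpos.le
    nlinarith [hmul]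
  have htop : Tendsto (fun k : ℕ => lam (k + 1) - lam k) atTop atTop :=
    tendsto_atTop_mono' atTop hkey (hμtop.const_mul_atTop hcpos)
  refine ⟨htop, ?_⟩
  -- lam is strictly monotone
  have hlmono : StrictMono lam := by
    apply strictMono_nat_of_lt_succ
    intro k
    rw [hlam, hlam]
    have h1 := (hroot k).1
    have h2 := hmono (Nat.lt_succ_self k)
    have h3 : 0 < μ (k + 1) ^ 2 - μ k ^ 2 := by nlinarith
    nlinarith [mul_pos hcpos h3]
  -- choose N with all later gaps ≥ 1
  obtain ⟨N, hN⟩ := (htop.eventually_ge_atTop 1).exists_forall_of_atTop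
  -- δ : positive lower bound for all gaps
  set g : ℕ → ℝ := fun k => lam (k + 1) - lam k with hg
  have hgpos : ∀ k, 0 < g k := fun k => sub_pos.mpr (hlmono (Nat.lt_succ_self k))
  set F : Finset ℝ := insert 1 ((Finset.range N).image g) with hF
  have hFne : F.Nonempty := ⟨1, Finset.mem_insert_self _ _⟩
  have hall : ∀ z ∈ F, (0 : ℝ) < z := by
    intro z hz
    rw [hF, Finset.mem_insert] at hz
    rcases hz with h | h
    · rw [h]; norm_num
    · obtain ⟨k, _, hk⟩ := Finset.mem_image.mp h
      rw [← hk]; exact hgpos k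
  have hδpos : 0 < F.min' hFne := hall _ (F.min'_mem hFne)
  have hδle : ∀ k, F.min' hFne ≤ g k := by
    intro k
    rcases lt_or_ge k N with h | h
    · exact Finset.min'_le _ _ (Finset.mem_insert_of_mem
        (Finset.mem_image.mpr ⟨k, Finset.mem_range.mpr h, rfl⟩))
    · exact le_trans (Finset.min'_le _ _ (Finset.mem_insert_self _ _)) (hN k h)
  -- every mutual gap is at least δ
  have hbound : ∀ d ∈ {d : ℝ | ∃ j k : ℕ, j ≠ k ∧ d = |lam j - lam k|}, F.min' hFne ≤ d := by
    rintro d ⟨j, k, hjk, rfl⟩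
    wlog hlt : k < j generalizing j k
    · rw [abs_sub_comm]
      exact this k j (Ne.symm hjk) (hjk.lt_or_gt.resolve_right hlt)
    have h1 : lam (k + 1) ≤ lam j := hlmono.monotone hlt
    have h2 : F.min' hFne ≤ lam j - lam k :=
      le_trans (hδle k) (by simpa [hg] using sub_le_sub_right h1 (lam k))
    calc F.min' hFne ≤ lam j - lam k := h2
      _ ≤ |lam j - lam k| := le_abs_self _
  refine lt_of_lt_of_le hδpos (le_csInf ⟨|lam 0 - lam 1|, 0, 1, by norm_num, rfl⟩ hbound)
end

section
/- Let β, κ, γ > 0, ω ∈ ℝ, u₁, u₂ ∈ ℂ, and let f, g : [0,1] → ℂ be twice continuously differentiable functions satisfying (iω + γ/β)·f(ξ) + κ·g''(ξ) = 0 and −(1/β)·f''(ξ) + iω·g(ξ) = 0 for all ξ ∈ [0,1], together with the boundary conditions f(0) = β·u₁, f'(0) = β·u₂, g(1) = 0, g'(1) = 0. Then (1/β)(iω + γ/β)·∫₀¹|f(ξ)|²dξ − iκω·∫₀¹|g(ξ)|²dξ = κ·g'(0)·conj(u₁) − κ·g(0)·conj(u₂). -/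
/-- Frequency-domain energy identity for the damped Euler–Bernoulli beam: if `f`, `g` are
twice continuously differentiable on `[0,1]` and satisfy
`(iω + γ/β)f + κg'' = 0`, `−(1/β)f'' + iωg = 0` with boundary conditions
`f(0) = βu₁`, `f'(0) = βu₂`, `g(1) = 0`, `g'(1) = 0`, then
`(1/β)(iω + γ/β)∫|f|² − iκω∫|g|² = κg'(0)·conj(u₁) − κg(0)·conj(u₂)`. -/
theorem beam_frequency_energy_identity
    (β κ γ : ℝ) (hβ : 0 < β) (hκ : 0 < κ) (hγ : 0 < γ) (ω : ℝ) (u₁ u₂ : ℂ)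
    (f f' f'' g g' g'' : ℝ → ℂ)
    (hf' : ∀ ξ ∈ Set.Icc (0:ℝ) 1, HasDerivWithinAt f (f' ξ) (Set.Icc (0:ℝ) 1) ξ)
    (hf'' : ∀ ξ ∈ Set.Icc (0:ℝ) 1, HasDerivWithinAt f' (f'' ξ) (Set.Icc (0:ℝ) 1) ξ)
    (hg' : ∀ ξ ∈ Set.Icc (0:ℝ) 1, HasDerivWithinAt g (g' ξ) (Set.Icc (0:ℝ) 1) ξ)
    (hg'' : ∀ ξ ∈ Set.Icc (0:ℝ) 1, HasDerivWithinAt g' (g'' ξ) (Set.Icc (0:ℝ) 1) ξ)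
    (hf''c : ContinuousOn f'' (Set.Icc (0:ℝ) 1))
    (hg''c : ContinuousOn g'' (Set.Icc (0:ℝ) 1))
    (hode1 : ∀ ξ ∈ Set.Icc (0:ℝ) 1,
      (Complex.I * (ω:ℂ) + (γ:ℂ) / (β:ℂ)) * f ξ + (κ:ℂ) * g'' ξ = 0)
    (hode2 : ∀ ξ ∈ Set.Icc (0:ℝ) 1,
      -(1 / (β:ℂ)) * f'' ξ + Complex.I * (ω:ℂ) * g ξ = 0)
    (hbc1 : f 0 = (β:ℂ) * u₁) (hbc2 : f' 0 = (β:ℂ) * u₂)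
    (hbc3 : g 1 = 0) (hbc4 : g' 1 = 0) :
    (1 / (β:ℂ)) * (Complex.I * (ω:ℂ) + (γ:ℂ) / (β:ℂ)) *
        (↑(∫ ξ in (0:ℝ)..1, ‖f ξ‖ ^ 2) : ℂ) -
      Complex.I * (κ:ℂ) * (ω:ℂ) * (↑(∫ ξ in (0:ℝ)..1, ‖g ξ‖ ^ 2) : ℂ) =
    (κ:ℂ) * g' 0 * (starRingEnd ℂ) u₁ - (κ:ℂ) * g 0 * (starRingEnd ℂ) u₂ := by
  have hβ0 : (β:ℂ) ≠ 0 := by exact_mod_cast hβ.ne'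
  have hκ0 : (κ:ℂ) ≠ 0 := by exact_mod_cast hκ.ne'
  set s : Set ℝ := Set.Icc (0:ℝ) 1 with hs
  have h0 : (0:ℝ) ∈ s := by simp [hs]
  have h1 : (1:ℝ) ∈ s := by simp [hs]
  -- continuity
  have hfc : ContinuousOn f s := fun x hx => (hf' x hx).continuousWithinAt
  have hf'c : ContinuousOn f' s := fun x hx => (hf'' x hx).continuousWithinAt
  have hgc : ContinuousOn g s := fun x hx => (hg' x hx).continuousWithinAt
  have hg'c : ContinuousOn g' s := fun x hx => (hg'' x hx).continuousWithinAt
  -- the potential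
  set F : ℝ → ℂ := fun ξ => ((κ:ℂ)/(β:ℂ)) * (g ξ * (starRingEnd ℂ) (f' ξ)
      - g' ξ * (starRingEnd ℂ) (f ξ)) with hF
  set F' : ℝ → ℂ := fun ξ => ((κ:ℂ)/(β:ℂ)) * (g ξ * (starRingEnd ℂ) (f'' ξ)
      - g'' ξ * (starRingEnd ℂ) (f ξ)) with hF'
  have hFderiv : ∀ x ∈ s, HasDerivWithinAt F (F' x) s x := by
    intro x hx
    have h1 : HasDerivWithinAt (fun ξ => g ξ * (starRingEnd ℂ) (f' ξ))
        (g' x * (starRingEnd ℂ) (f' x) + g x * (starRingEnd ℂ) (f'' x)) s x :=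
      (hg' x hx).mul ((hf'' x hx).star)
    have h2 : HasDerivWithinAt (fun ξ => g' ξ * (starRingEnd ℂ) (f ξ))
        (g'' x * (starRingEnd ℂ) (f x) + g' x * (starRingEnd ℂ) (f' x)) s x :=
      (hg'' x hx).mul ((hf' x hx).star)
    have := ((h1.sub h2).const_mul ((κ:ℂ)/(β:ℂ)))
    have heq : F' x = (κ:ℂ)/(β:ℂ) * (g' x * (starRingEnd ℂ) (f' x) + g x * (starRingEnd ℂ) (f'' x)
        - (g'' x * (starRingEnd ℂ) (f x) + g' x * (starRingEnd ℂ) (f' x))) := by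
      simp only [hF']; ring
    rw [heq]
    exact this
  have hF'c : ContinuousOn F' s := by
    apply ContinuousOn.mul continuousOn_const
    exact (hgc.mul (continuous_star.comp_continuousOn hf''c)).sub
      (hg''c.mul (continuous_star.comp_continuousOn hfc))
  have hFc : ContinuousOn F s := fun x hx => (hFderiv x hx).continuousWithinAt
  -- FTC
  have hFTC : ∫ ξ in (0:ℝ)..1, F' ξ = F 1 - F 0 := by
    apply intervalIntegral.integral_eq_sub_of_hasDeriv_right_of_le zero_le_one hFc
    · intro x hx
      exact (((hFderiv x (Set.mem_Icc_of_Ioo hx)).hasDerivAt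
        (Icc_mem_nhds hx.1 hx.2)).hasDerivWithinAt)
    · exact hF'c.intervalIntegrable_of_Icc zero_le_one
  -- pointwise identity for F'
  have hpt : ∀ ξ ∈ s, F' ξ =
      (1 / (β:ℂ)) * (Complex.I * (ω:ℂ) + (γ:ℂ) / (β:ℂ)) * ((‖f ξ‖ ^ 2 : ℝ) : ℂ)
      - Complex.I * (κ:ℂ) * (ω:ℂ) * ((‖g ξ‖ ^ 2 : ℝ) : ℂ) := by
    intro ξ hξ
    have e1 : (κ:ℂ) * g'' ξ = -((Complex.I * (ω:ℂ) + (γ:ℂ) / (β:ℂ)) * f ξ) := by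
      have := hode1 ξ hξ; linear_combination this
    have e2 : f'' ξ = (β:ℂ) * (Complex.I * (ω:ℂ)) * g ξ := by
      have h := hode2 ξ hξ
      field_simp at h
      linear_combination -h
    have habsf : ((‖f ξ‖ ^ 2 : ℝ) : ℂ) = f ξ * (starRingEnd ℂ) (f ξ) := by
      rw [Complex.mul_conj]; norm_cast; exact Complex.sq_norm _
    have habsg : ((‖g ξ‖ ^ 2 : ℝ) : ℂ) = g ξ * (starRingEnd ℂ) (g ξ) := by
      rw [Complex.mul_conj]; norm_cast; exact Complex.sq_norm _
    have hconj : (starRingEnd ℂ) (f'' ξ) = (β:ℂ) * (-(Complex.I * (ω:ℂ))) *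
        (starRingEnd ℂ) (g ξ) := by
      rw [e2]; simp [map_mul, Complex.conj_I]
    have e1' : (κ:ℂ) * (β:ℂ) * g'' ξ = -((Complex.I * (ω:ℂ) * (β:ℂ) + (γ:ℂ)) * f ξ) := by
      have h := hode1 ξ hξ
      field_simp at h
      linear_combination h
    simp only [hF']
    rw [habsf, habsg, hconj]
    field_simp
    linear_combination (-(starRingEnd ℂ) (f ξ)) * e1'
  -- rewrite the LHS as ∫ F'
  have hint : ∫ ξ in (0:ℝ)..1, F' ξ =
      (1 / (β:ℂ)) * (Complex.I * (ω:ℂ) + (γ:ℂ) / (β:ℂ)) *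
        (↑(∫ ξ in (0:ℝ)..1, ‖f ξ‖ ^ 2) : ℂ) -
      Complex.I * (κ:ℂ) * (ω:ℂ) * (↑(∫ ξ in (0:ℝ)..1, ‖g ξ‖ ^ 2) : ℂ) := by
    have hrw : ∫ ξ in (0:ℝ)..1, F' ξ = ∫ ξ in (0:ℝ)..1,
        ((1 / (β:ℂ)) * (Complex.I * (ω:ℂ) + (γ:ℂ) / (β:ℂ)) *
          ((‖f ξ‖ ^ 2 : ℝ) : ℂ)
        - Complex.I * (κ:ℂ) * (ω:ℂ) * ((‖g ξ‖ ^ 2 : ℝ) : ℂ)) := by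
      apply intervalIntegral.integral_congr
      intro ξ hξ
      rw [Set.uIcc_of_le zero_le_one] at hξ
      exact hpt ξ hξ
    rw [hrw]
    have hif : IntervalIntegrable (fun ξ => ((‖f ξ‖ ^ 2 : ℝ) : ℂ))
        MeasureTheory.volume 0 1 := by
      apply ContinuousOn.intervalIntegrable_of_Icc zero_le_one
      exact Complex.continuous_ofReal.comp_continuousOn
        (((continuous_norm.comp_continuousOn hfc).pow 2))
    have hig : IntervalIntegrable (fun ξ => ((‖g ξ‖ ^ 2 : ℝ) : ℂ))
        MeasureTheory.volume 0 1 := by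
      apply ContinuousOn.intervalIntegrable_of_Icc zero_le_one
      exact Complex.continuous_ofReal.comp_continuousOn
        (((continuous_norm.comp_continuousOn hgc).pow 2))
    rw [intervalIntegral.integral_sub (hif.const_mul _) (hig.const_mul _),
      intervalIntegral.integral_const_mul, intervalIntegral.integral_const_mul,
      intervalIntegral.integral_ofReal, intervalIntegral.integral_ofReal]
  -- conclude
  rw [← hint, hFTC]
  simp only [hF, hbc1, hbc2, hbc3, hbc4, map_mul, Complex.conj_ofReal]
  field_simp
  ring
end

section
/- Let β, κ, γ > 0, let ω ∈ ℝ with |ω| ≥ 1, let u₁, u₂ ∈ ℂ, and let f, g : [0,1] → ℂ be twice continuously differentiable functions satisfying (iω + γ/β)·f(ξ) + κ·g''(ξ) = 0 and −(1/β)·f''(ξ) + iω·g(ξ) = 0 for all ξ ∈ [0,1], together with f(0) = β·u₁, f'(0) = β·u₂, g(1) = 0, g'(1) = 0. Then (1/β)·∫₀¹|f(ξ)|²dξ + κ·∫₀¹|g(ξ)|²dξ ≤ (2β/γ + 1)·‖(κ·g'(0), −κ·g(0))‖·‖(u₁, u₂)‖, where ‖·‖ denotes the Euclidean norm on ℂ².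 -/
open Set intervalIntegral

private lemma cs2 (a b c d : ℝ) :
    a * c + b * d ≤ Real.sqrt (a ^ 2 + b ^ 2) * Real.sqrt (c ^ 2 + d ^ 2) := by
  have h1 := Real.sq_sqrt (show (0:ℝ) ≤ a ^ 2 + b ^ 2 by positivity)
  have h2 := Real.sq_sqrt (show (0:ℝ) ≤ c ^ 2 + d ^ 2 by positivity)
  have h3 := Real.sqrt_nonneg (a ^ 2 + b ^ 2)
  have h4 := Real.sqrt_nonneg (c ^ 2 + d ^ 2)
  nlinarith [sq_nonneg (a * d - b * c), mul_nonneg h3 h4,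
    sq_nonneg (Real.sqrt (a ^ 2 + b ^ 2) * Real.sqrt (c ^ 2 + d ^ 2) - (a * c + b * d))]


/-- Frequency-domain resolvent estimate for the damped Euler–Bernoulli beam: for `|ω| ≥ 1`,
the squared energy norm `(1/β)∫|f|² + κ∫|g|²` of the solution is bounded by
`(2β/γ + 1)·‖(κg′(0), −κg(0))‖·‖(u₁,u₂)‖` (Euclidean norms on `ℂ²`). -/
theorem beam_resolvent_energy_estimate
    (β κ γ : ℝ) (hβ : 0 < β) (hκ : 0 < κ) (hγ : 0 < γ) (ω : ℝ) (hω : 1 ≤ |ω|)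
    (u₁ u₂ : ℂ) (f f' f'' g g' g'' : ℝ → ℂ)
    (hf' : ∀ ξ ∈ Set.Icc (0:ℝ) 1, HasDerivWithinAt f (f' ξ) (Set.Icc (0:ℝ) 1) ξ)
    (hf'' : ∀ ξ ∈ Set.Icc (0:ℝ) 1, HasDerivWithinAt f' (f'' ξ) (Set.Icc (0:ℝ) 1) ξ)
    (hg' : ∀ ξ ∈ Set.Icc (0:ℝ) 1, HasDerivWithinAt g (g' ξ) (Set.Icc (0:ℝ) 1) ξ)
    (hg'' : ∀ ξ ∈ Set.Icc (0:ℝ) 1, HasDerivWithinAt g' (g'' ξ) (Set.Icc (0:ℝ) 1) ξ)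
    (hf''c : ContinuousOn f'' (Set.Icc (0:ℝ) 1))
    (hg''c : ContinuousOn g'' (Set.Icc (0:ℝ) 1))
    (hode1 : ∀ ξ ∈ Set.Icc (0:ℝ) 1,
      (Complex.I * (ω:ℂ) + (γ:ℂ) / (β:ℂ)) * f ξ + (κ:ℂ) * g'' ξ = 0)
    (hode2 : ∀ ξ ∈ Set.Icc (0:ℝ) 1,
      -(1 / (β:ℂ)) * f'' ξ + Complex.I * (ω:ℂ) * g ξ = 0)
    (hbc1 : f 0 = (β:ℂ) * u₁) (hbc2 : f' 0 = (β:ℂ) * u₂)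
    (hbc3 : g 1 = 0) (hbc4 : g' 1 = 0) :
    (1 / β) * (∫ ξ in (0:ℝ)..1, ‖f ξ‖ ^ 2) +
        κ * (∫ ξ in (0:ℝ)..1, ‖g ξ‖ ^ 2) ≤
      (2 * β / γ + 1) *
        Real.sqrt (‖(κ:ℂ) * g' 0‖ ^ 2 + ‖-(κ:ℂ) * g 0‖ ^ 2) *
        Real.sqrt (‖u₁‖ ^ 2 + ‖u₂‖ ^ 2) := by
  have hβ0 : (β:ℂ) ≠ 0 := by exact_mod_cast hβ.ne'
  have hκ0 : (κ:ℂ) ≠ 0 := by exact_mod_cast hκ.ne'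
  have hω0 : ω ≠ 0 := by intro h; rw [h] at hω; simp at hω; linarith
  -- continuity
  have hfc : ContinuousOn f (Icc 0 1) := fun x hx => (hf' x hx).continuousWithinAt
  have hgc : ContinuousOn g (Icc 0 1) := fun x hx => (hg' x hx).continuousWithinAt
  -- ODE rewrites
  have hgpp : ∀ ξ ∈ Icc (0:ℝ) 1, (κ:ℂ) * g'' ξ = -(Complex.I * ω + γ/β) * f ξ := by
    intro ξ hξ; linear_combination hode1 ξ hξ
  have hfpp : ∀ ξ ∈ Icc (0:ℝ) 1, f'' ξ = Complex.I * ω * β * g ξ := by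
    intro ξ hξ
    have h := hode2 ξ hξ
    have h2 : -(1/(β:ℂ)) * f'' ξ = -(1/(β:ℂ)) * (Complex.I * ω * β * g ξ) := by
      rw [show -(1/(β:ℂ)) * (Complex.I * ω * β * g ξ) = -(Complex.I * ω * g ξ) by
        field_simp]
      linear_combination h
    exact mul_left_cancel₀ (by simp [hβ0]) h2
  -- the function for FTC
  set F : ℝ → ℂ := fun ξ => g' ξ * (starRingEnd ℂ) (f ξ) - g ξ * (starRingEnd ℂ) (f' ξ)
    with hF
  set h : ℝ → ℂ := fun ξ => g'' ξ * (starRingEnd ℂ) (f ξ) - g ξ * (starRingEnd ℂ) (f'' ξ)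
    with hh
  have hFd : ∀ x ∈ Icc (0:ℝ) 1, HasDerivWithinAt F (h x) (Icc 0 1) x := by
    intro x hx
    have d1 := (hg'' x hx).mul ((hf' x hx).star)
    have d2 := (hg' x hx).mul ((hf'' x hx).star)
    have := d1.sub d2
    convert this using 1
    · rfl
    · rfl
    · simp only [hh, starRingEnd_apply]
      ring
  have hFcont : ContinuousOn F (Icc 0 1) := fun x hx => (hFd x hx).continuousWithinAt
  have hhcont : ContinuousOn h (Icc 0 1) := by
    apply ContinuousOn.sub
    · exact hg''c.mul (Complex.continuous_conj.comp_continuousOn hfc)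
    · exact hgc.mul (Complex.continuous_conj.comp_continuousOn hf''c)
  have hint : IntervalIntegrable h MeasureTheory.volume 0 1 := by
    apply ContinuousOn.intervalIntegrable
    rwa [uIcc_of_le (by norm_num)]
  have key : ∫ ξ in (0:ℝ)..1, h ξ = F 1 - F 0 := by
    apply integral_eq_sub_of_hasDeriv_right_of_le (by norm_num) hFcont _ hint
    intro x hx
    exact (hFd x (Ioo_subset_Icc_self hx)).mono_of_mem_nhdsWithin
      (mem_nhdsWithin_of_mem_nhds (Icc_mem_nhds hx.1 hx.2))
  have hF1 : F 1 = 0 := by simp [hF, hbc3, hbc4]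
  set W : ℂ := g' 0 * (starRingEnd ℂ) u₁ - g 0 * (starRingEnd ℂ) u₂ with hW
  set S : ℂ := (κ:ℂ) * W with hS
  have hF0 : F 0 = (β:ℂ) * W := by
    simp only [hF, hW, hbc1, hbc2, map_mul, Complex.conj_ofReal]
    ring
  set A : ℝ := ∫ ξ in (0:ℝ)..1, ‖f ξ‖ ^ 2 with hA
  set B : ℝ := ∫ ξ in (0:ℝ)..1, ‖g ξ‖ ^ 2 with hB
  have hAint : IntervalIntegrable (fun ξ => (‖f ξ‖ ^ 2 : ℝ))
      MeasureTheory.volume 0 1 := by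
    apply ContinuousOn.intervalIntegrable
    rw [uIcc_of_le (by norm_num)]
    exact (continuous_norm.comp_continuousOn hfc).pow 2
  have hBint : IntervalIntegrable (fun ξ => (‖g ξ‖ ^ 2 : ℝ))
      MeasureTheory.volume 0 1 := by
    apply ContinuousOn.intervalIntegrable
    rw [uIcc_of_le (by norm_num)]
    exact (continuous_norm.comp_continuousOn hgc).pow 2
  -- rewrite κ * ∫ h
  have hrw : (κ:ℂ) * ∫ ξ in (0:ℝ)..1, h ξ =
      (-(Complex.I * ω + γ/β)) * (A:ℂ) + (Complex.I * ω * β * κ) * (B:ℂ) := by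
    rw [← integral_const_mul]
    have : ∫ ξ in (0:ℝ)..1, (κ:ℂ) * h ξ = ∫ ξ in (0:ℝ)..1,
        ((-(Complex.I * ω + γ/β)) * ((‖f ξ‖ ^ 2 : ℝ) : ℂ)
          + (Complex.I * ω * β * κ) * ((‖g ξ‖ ^ 2 : ℝ) : ℂ)) := by
      apply integral_congr
      intro ξ hξ
      rw [uIcc_of_le (by norm_num)] at hξ
      have h1 : f ξ * (starRingEnd ℂ) (f ξ) = ((‖f ξ‖ ^ 2 : ℝ) : ℂ) := by
        rw [Complex.mul_conj, Complex.normSq_eq_norm_sq]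
      have h2 : g ξ * (starRingEnd ℂ) (g ξ) = ((‖g ξ‖ ^ 2 : ℝ) : ℂ) := by
        rw [Complex.mul_conj, Complex.normSq_eq_norm_sq]
      simp only [hh]
      rw [hfpp ξ hξ]
      simp only [map_mul, Complex.conj_I, Complex.conj_ofReal]
      linear_combination ((starRingEnd ℂ) (f ξ)) * hgpp ξ hξ
        + (-(Complex.I * ω + γ/β)) * h1 + (Complex.I * ω * β * κ) * h2
    rw [this, integral_add, integral_const_mul, integral_const_mul,
      intervalIntegral.integral_ofReal, intervalIntegral.integral_ofReal]
    · apply IntervalIntegrable.const_mul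
      apply ContinuousOn.intervalIntegrable
      rw [uIcc_of_le (by norm_num)]
      exact Complex.continuous_ofReal.comp_continuousOn
        ((continuous_norm.comp_continuousOn hfc).pow 2)
    · apply IntervalIntegrable.const_mul
      apply ContinuousOn.intervalIntegrable
      rw [uIcc_of_le (by norm_num)]
      exact Complex.continuous_ofReal.comp_continuousOn
        ((continuous_norm.comp_continuousOn hgc).pow 2)
  -- main complex identity: (Iω + γ/β) A - Iωβκ B = β S
  have main2 : (Complex.I * ω + ((γ/β : ℝ) : ℂ)) * (A:ℂ)
      - Complex.I * ω * β * κ * (B:ℂ) = (β:ℂ) * S := by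
    have := hrw
    rw [key, hF1, hF0] at this
    push_cast
    rw [hS]
    linear_combination this
  rw [Complex.ext_iff] at main2
  obtain ⟨hre, him⟩ := main2
  simp only [Complex.add_re, Complex.add_im, Complex.sub_re, Complex.sub_im, Complex.mul_re,
    Complex.mul_im, Complex.I_re, Complex.I_im, Complex.ofReal_re, Complex.ofReal_im] at hre him
  ring_nf at hre him
  set Z : ℂ := ↑κ * g' 0 * (starRingEnd ℂ) u₁ - ↑κ * g 0 * (starRingEnd ℂ) u₂ with hZ
  have hSZ : S = Z := by rw [hS, hW, hZ]; ring
  rw [hSZ] at hre him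
  set s : ℝ := ‖Z‖ with hs
  have e1 : 1 / β * A = β / γ * Z.re := by
    field_simp at hre ⊢
    linarith
  have e2 : κ * B = 1 / β * A - Z.im / ω := by
    field_simp
    linear_combination -him
  have hr : Z.re ≤ s := Complex.re_le_norm Z
  have hm : -(Z.im / ω) ≤ s := by
    have h1 : |Z.im / ω| ≤ |Z.im| := by
      rw [abs_div]; exact div_le_self (abs_nonneg _) hω
    calc -(Z.im / ω) ≤ |Z.im / ω| := neg_le_abs _
      _ ≤ |Z.im| := h1
      _ ≤ s := Complex.abs_im_le_norm Z
  have hsZ : s ≤ Real.sqrt (‖(κ:ℂ) * g' 0‖ ^ 2 + ‖-(κ:ℂ) * g 0‖ ^ 2) *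
      Real.sqrt (‖u₁‖ ^ 2 + ‖u₂‖ ^ 2) := by
    have hZ2 : Z = ((κ:ℂ) * g' 0) * (starRingEnd ℂ) u₁ + ((-(κ:ℂ)) * g 0) * (starRingEnd ℂ) u₂ := by
      rw [hZ]; ring
    calc s = ‖Z‖ := hs
      _ ≤ ‖((κ:ℂ) * g' 0) * (starRingEnd ℂ) u₁‖
          + ‖((-(κ:ℂ)) * g 0) * (starRingEnd ℂ) u₂‖ := by
          rw [hZ2]; exact norm_add_le _ _
      _ = ‖(κ:ℂ) * g' 0‖ * ‖u₁‖
          + ‖-(κ:ℂ) * g 0‖ * ‖u₂‖ := by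
          simp [norm_mul, Complex.norm_conj]
      _ ≤ _ := cs2 _ _ _ _
  have hstep : 1 / β * A + κ * B ≤ (2 * β / γ + 1) * s := by
    rw [e2, e1]
    have t1 : 0 ≤ β / γ * (s - Z.re) := mul_nonneg (div_pos hβ hγ).le (by linarith)
    have h2 : 2 * β / γ = 2 * (β / γ) := by ring
    rw [h2]
    nlinarith [t1, hm]
  calc 1 / β * A + κ * B ≤ (2 * β / γ + 1) * s := hstep
    _ ≤ _ := by
        rw [mul_assoc]
        exact mul_le_mul_of_nonneg_left hsZ (by positivity)
end

section
/- Let β, κ, γ > 0, let u₁, u₂ ∈ ℂ, and let f, g : [0,1] → ℂ be twice continuously differentiable functions satisfying (γ/β)·f(ξ) + κ·g''(ξ) = 0 and f''(ξ) = 0 for all ξ ∈ [0,1], together with f(0) = β·u₁, f'(0) = β·u₂, g(1) = 0, g'(1) = 0. Then κ·g'(0) = γ·(u₁ + u₂/2) and −κ·g(0) = γ·(u₁/2 + u₂/3). In particular the boundary output (κg'(0), −κg(0)) equals γ·M·(u₁,u₂) with the invertible matrix M = [[1, 1/2],[1/2, 1/3]]. -/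
set_option maxHeartbeats 1000000


/-- Frequency-domain computation at `ω = 0` for the damped Euler–Bernoulli beam: from
`(γ/β)f + κg'' = 0`, `f'' = 0` with `f(0) = βu₁`, `f'(0) = βu₂`, `g(1) = g'(1) = 0`,
one gets `κg'(0) = γ(u₁ + u₂/2)` and `−κg(0) = γ(u₁/2 + u₂/3)`; in particular the boundary
output equals `γ·M·(u₁,u₂)` with the invertible matrix `M = [[1,1/2],[1/2,1/3]]`. -/
theorem beam_transfer_function_at_zero
    (β κ γ : ℝ) (hβ : 0 < β) (hκ : 0 < κ) (hγ : 0 < γ) (u₁ u₂ : ℂ)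
    (f f' f'' g g' g'' : ℝ → ℂ)
    (hf' : ∀ ξ ∈ Set.Icc (0:ℝ) 1, HasDerivWithinAt f (f' ξ) (Set.Icc (0:ℝ) 1) ξ)
    (hf'' : ∀ ξ ∈ Set.Icc (0:ℝ) 1, HasDerivWithinAt f' (f'' ξ) (Set.Icc (0:ℝ) 1) ξ)
    (hg' : ∀ ξ ∈ Set.Icc (0:ℝ) 1, HasDerivWithinAt g (g' ξ) (Set.Icc (0:ℝ) 1) ξ)
    (hg'' : ∀ ξ ∈ Set.Icc (0:ℝ) 1, HasDerivWithinAt g' (g'' ξ) (Set.Icc (0:ℝ) 1) ξ)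
    (hf''c : ContinuousOn f'' (Set.Icc (0:ℝ) 1))
    (hg''c : ContinuousOn g'' (Set.Icc (0:ℝ) 1))
    (hode1 : ∀ ξ ∈ Set.Icc (0:ℝ) 1, ((γ:ℂ) / (β:ℂ)) * f ξ + (κ:ℂ) * g'' ξ = 0)
    (hode2 : ∀ ξ ∈ Set.Icc (0:ℝ) 1, f'' ξ = 0)
    (hbc1 : f 0 = (β:ℂ) * u₁) (hbc2 : f' 0 = (β:ℂ) * u₂)
    (hbc3 : g 1 = 0) (hbc4 : g' 1 = 0) :
    (κ:ℂ) * g' 0 = (γ:ℂ) * (u₁ + u₂ / 2) ∧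
    -(κ:ℂ) * g 0 = (γ:ℂ) * (u₁ / 2 + u₂ / 3) ∧
    ![(κ:ℂ) * g' 0, -(κ:ℂ) * g 0] =
      (γ:ℂ) • Matrix.mulVec !![(1:ℂ), 1/2; 1/2, 1/3] ![u₁, u₂] ∧
    IsUnit (!![(1:ℂ), 1/2; 1/2, 1/3]) := by
  have hκ0 : (κ:ℂ) ≠ 0 := by exact_mod_cast hκ.ne'
  have hβ0 : (β:ℂ) ≠ 0 := by exact_mod_cast hβ.ne'
  have hγ0 : (γ:ℂ) ≠ 0 := by exact_mod_cast hγ.ne'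
  -- generic constancy principle
  have key : ∀ (F F' : ℝ → ℂ),
      (∀ ξ ∈ Set.Icc (0:ℝ) 1, HasDerivWithinAt F (F' ξ) (Set.Icc (0:ℝ) 1) ξ) →
      (∀ ξ ∈ Set.Icc (0:ℝ) 1, F' ξ = 0) →
      ∀ ξ ∈ Set.Icc (0:ℝ) 1, F ξ = F 0 := by
    intro F F' hF h0 ξ hξ
    refine constant_of_has_deriv_right_zero (f := F) (a := 0) (b := 1)
      (fun x hx => (hF x hx).continuousWithinAt) ?_ ξ hξ
    intro x hx
    have h := hF x ⟨hx.1, hx.2.le⟩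
    rw [h0 x ⟨hx.1, hx.2.le⟩] at h
    exact HasDerivWithinAt.mono_of_mem_nhdsWithin h (Icc_mem_nhdsGE_of_mem hx)
  have hid : ∀ x : ℝ, HasDerivAt (fun x:ℝ => (x:ℂ)) 1 x := fun x => by
    simpa using (hasDerivAt_id x).ofReal_comp
  -- f' is constant
  have hf'const : ∀ ξ ∈ Set.Icc (0:ℝ) 1, f' ξ = (β:ℂ) * u₂ := by
    intro ξ hξ
    rw [key f' f'' hf'' hode2 ξ hξ, hbc2]
  -- f is linear
  have hflin : ∀ ξ ∈ Set.Icc (0:ℝ) 1, f ξ = (β:ℂ) * u₁ + (β:ℂ) * u₂ * (ξ:ℂ) := by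
    have h := key (fun ξ => f ξ - (β:ℂ) * u₂ * (ξ:ℂ))
      (fun ξ => f' ξ - (β:ℂ) * u₂) ?_ ?_
    · intro ξ hξ
      have := h ξ hξ
      simp only [Complex.ofReal_zero, mul_zero, sub_zero, hbc1] at this
      linear_combination this
    · intro ξ hξ
      exact (hf' ξ hξ).sub (((hid ξ).const_mul ((β:ℂ) * u₂)).hasDerivWithinAt.congr_deriv
        (by ring))
    · intro ξ hξ
      show f' ξ - (β:ℂ) * u₂ = 0
      rw [hf'const ξ hξ, sub_self]
  -- g'' explicitly
  set c : ℂ := (γ:ℂ) / (κ:ℂ) with hc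
  have hg''eq : ∀ ξ ∈ Set.Icc (0:ℝ) 1, g'' ξ = -c * (u₁ + u₂ * (ξ:ℂ)) := by
    intro ξ hξ
    have h := hode1 ξ hξ
    rw [hflin ξ hξ] at h
    field_simp at h
    have h4 : g'' ξ * (κ:ℂ) = -((γ:ℂ) * (u₁ + u₂ * (ξ:ℂ))) :=
      mul_right_cancel₀ hβ0 (by linear_combination (β:ℂ) * h)
    rw [hc]
    field_simp
    linear_combination h4
  -- g' : subtract explicit antiderivative of g''
  set P : ℝ → ℂ := fun ξ => -c * (u₁ * (ξ:ℂ) + u₂ * ((ξ:ℂ) * (ξ:ℂ)) / 2) with hP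
  have hPderiv : ∀ ξ : ℝ, HasDerivAt P (-c * (u₁ + u₂ * (ξ:ℂ))) ξ := by
    intro ξ
    have h1 : HasDerivAt (fun x:ℝ => u₁ * (x:ℂ) + u₂ * ((x:ℂ) * (x:ℂ)) / 2)
        (u₁ * 1 + u₂ * (1 * (ξ:ℂ) + (ξ:ℂ) * 1) / 2) ξ :=
      (((hid ξ).const_mul u₁)).add ((((hid ξ).mul (hid ξ)).const_mul u₂).div_const 2)
    have h2 := h1.const_mul (-c)
    convert h2 using 1
    · rfl
    ring
  have hg'eq : ∀ ξ ∈ Set.Icc (0:ℝ) 1, g' ξ = P ξ + g' 0 := by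
    have h := key (fun ξ => g' ξ - P ξ) (fun ξ => g'' ξ - (-c * (u₁ + u₂ * (ξ:ℂ)))) ?_ ?_
    · intro ξ hξ
      have h2 : g' ξ - P ξ = g' 0 - P 0 := h ξ hξ
      have hP0 : P 0 = 0 := by simp [hP]
      rw [hP0, sub_zero] at h2
      linear_combination h2
    · intro ξ hξ
      exact (hg'' ξ hξ).sub (hPderiv ξ).hasDerivWithinAt
    · intro ξ hξ
      show g'' ξ - -c * (u₁ + u₂ * (ξ:ℂ)) = 0
      rw [hg''eq ξ hξ]; ring
  have hI1 : (1:ℝ) ∈ Set.Icc (0:ℝ) 1 := by constructor <;> norm_num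
  have hg'0 : g' 0 = c * (u₁ + u₂ / 2) := by
    have := hg'eq 1 hI1
    rw [hbc4] at this
    simp only [hP, Complex.ofReal_one] at this
    linear_combination -this
  -- g : subtract explicit antiderivative of g'
  set Q : ℝ → ℂ := fun ξ => -c * (u₁ * ((ξ:ℂ) * (ξ:ℂ)) / 2 + u₂ * ((ξ:ℂ) * (ξ:ℂ) * (ξ:ℂ)) / 6) + g' 0 * (ξ:ℂ)
      with hQ
  have hQderiv : ∀ ξ : ℝ, HasDerivAt Q (P ξ + g' 0) ξ := by
    intro ξ
    have h1 : HasDerivAt (fun x:ℝ => u₁ * ((x:ℂ) * (x:ℂ)) / 2 + u₂ * ((x:ℂ) * (x:ℂ) * (x:ℂ)) / 6)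
        (u₁ * (1 * (ξ:ℂ) + (ξ:ℂ) * 1) / 2 + u₂ * ((1 * (ξ:ℂ) + (ξ:ℂ) * 1) * (ξ:ℂ) + (ξ:ℂ) * (ξ:ℂ) * 1) / 6) ξ :=
      ((((hid ξ).mul (hid ξ)).const_mul u₁).div_const 2).add
        (((((hid ξ).mul (hid ξ)).mul (hid ξ)).const_mul u₂).div_const 6)
    have h2 := (h1.const_mul (-c)).add ((hid ξ).const_mul (g' 0))
    convert h2 using 1
    · rfl
    · rfl
    simp only [hP]
    ring
  have hgeq : ∀ ξ ∈ Set.Icc (0:ℝ) 1, g ξ = Q ξ + g 0 := by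
    have h := key (fun ξ => g ξ - Q ξ) (fun ξ => g' ξ - (P ξ + g' 0)) ?_ ?_
    · intro ξ hξ
      have h2 : g ξ - Q ξ = g 0 - Q 0 := h ξ hξ
      have hQ0 : Q 0 = 0 := by simp [hQ]
      rw [hQ0, sub_zero] at h2
      linear_combination h2
    · intro ξ hξ
      exact (hg' ξ hξ).sub (hQderiv ξ).hasDerivWithinAt
    · intro ξ hξ
      show g' ξ - (P ξ + g' 0) = 0
      rw [hg'eq ξ hξ]; ring
  have hg0 : g 0 = -c * (u₁ / 2 + u₂ / 3) := by
    have := hgeq 1 hI1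
    rw [hbc3] at this
    simp only [hQ, Complex.ofReal_one, hg'0] at this
    linear_combination -this
  have e1 : (κ:ℂ) * g' 0 = (γ:ℂ) * (u₁ + u₂ / 2) := by
    rw [hg'0, hc]; field_simp
  have e2 : -(κ:ℂ) * g 0 = (γ:ℂ) * (u₁ / 2 + u₂ / 3) := by
    rw [hg0, hc]; field_simp
  refine ⟨e1, e2, ?_, ?_⟩
  · funext i
    fin_cases i
    · simp only [Matrix.cons_mulVec, Matrix.cons_dotProduct, Matrix.dotProduct_of_isEmpty,
        Matrix.cons_val_zero, Pi.smul_apply, smul_eq_mul, Matrix.cons_val_zero]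
      simpa using by linear_combination e1
    · simp only [Pi.smul_apply, smul_eq_mul]
      simpa [Matrix.mulVec, dotProduct] using by linear_combination e2
  · rw [Matrix.isUnit_iff_isUnit_det, Matrix.det_fin_two_of]
    norm_num [isUnit_iff_ne_zero]
end

section
/- Let β, κ, γ > 0 and for ω > 0 let α(ω) = (β/κ)^{1/4}·(ω² − i(γ/β)ω)^{1/4} ∈ ℂ, where z^{1/4} = exp((1/4)·Log z) denotes the principal fourth root. Then there exist ω₀ ≥ 1 and constants m₁, m₂, m₃, m₄ > 0 such that for all ω ≥ ω₀: m₁·√ω ≤ Re(α(ω)) ≤ m₂·√ω and m₃/√ω ≤ −Im(α(ω)) ≤ m₄/√ω. -/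
open Real

/-- The characteristic wavenumber `α(ω) = (β/κ)^{1/4}·(ω² − i(γ/β)ω)^{1/4}`, where
`z^{1/4} = exp((1/4)·Log z)` is the principal fourth root. -/
noncomputable def alphaWN (β κ γ ω : ℝ) : ℂ :=
  ((β / κ) ^ ((1:ℝ)/4) : ℝ) *
    Complex.exp ((1/4 : ℂ) * Complex.log ((ω:ℂ) ^ 2 - Complex.I * ((γ:ℂ) / (β:ℂ)) * (ω:ℂ)))

lemma aux_rpow_quarter (x : ℝ) (hx : 0 ≤ x) : (x^2) ^ ((1:ℝ)/4) = Real.sqrt x := by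
  have h : x^2 = (Real.sqrt x)^(4:ℕ) := by
    rw [show ((Real.sqrt x)^(4:ℕ) = ((Real.sqrt x)^2)^2) by ring, Real.sq_sqrt hx]
  rw [h, ← Real.rpow_natCast (Real.sqrt x) 4, ← Real.rpow_mul (Real.sqrt_nonneg x)]
  norm_num

set_option maxHeartbeats 1000000 in
/-- Asymptotics of the wavenumber: `Re α(ω) ≍ √ω` and `−Im α(ω) ≍ 1/√ω` for large `ω`. -/
theorem alphaWN_re_im_asymptotics (β κ γ : ℝ) (hβ : 0 < β) (hκ : 0 < κ) (hγ : 0 < γ) :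
    ∃ ω₀ ≥ (1:ℝ), ∃ m₁ > (0:ℝ), ∃ m₂ > (0:ℝ), ∃ m₃ > (0:ℝ), ∃ m₄ > (0:ℝ),
      ∀ ω : ℝ, ω₀ ≤ ω →
        m₁ * Real.sqrt ω ≤ (alphaWN β κ γ ω).re ∧
        (alphaWN β κ γ ω).re ≤ m₂ * Real.sqrt ω ∧
        m₃ / Real.sqrt ω ≤ -(alphaWN β κ γ ω).im ∧
        -(alphaWN β κ γ ω).im ≤ m₄ / Real.sqrt ω := by
  set k : ℝ := γ / β with hkdef
  have hk : 0 < k := div_pos hγ hβ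
  set c : ℝ := (β / κ) ^ ((1:ℝ)/4) with hcdef
  have hc : 0 < c := Real.rpow_pos_of_pos (div_pos hβ hκ) _
  set M : ℝ := Real.sqrt (1 + k^2) with hMdef
  have hM : 0 < M := Real.sqrt_pos.mpr (by positivity)
  have hM14 : 0 < M ^ ((1:ℝ)/4) := Real.rpow_pos_of_pos hM _
  refine ⟨1, le_refl 1, c/2, by positivity, c * M ^ ((1:ℝ)/4), by positivity,
    3*c*k/(16*M), by positivity, c * M ^ ((1:ℝ)/4) * k / 4, by positivity, ?_⟩
  intro ω hω
  have hω0 : 0 < ω := lt_of_lt_of_le one_pos hω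
  have hs : 0 < Real.sqrt ω := Real.sqrt_pos.mpr hω0
  have hss : Real.sqrt ω * Real.sqrt ω = ω := Real.mul_self_sqrt hω0.le
  set z : ℂ := (ω:ℂ) ^ 2 - Complex.I * ((γ:ℂ) / (β:ℂ)) * (ω:ℂ) with hzdef
  have hzeq : z = ((ω^2 : ℝ):ℂ) + ((-(k*ω) : ℝ):ℂ) * Complex.I := by
    rw [hzdef, hkdef]; push_cast; ring
  have hzre : z.re = ω^2 := by
    rw [hzeq]; simp [pow_two, Complex.mul_re, Complex.mul_im]
  have hzim : z.im = -(k*ω) := by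
    rw [hzeq]; simp [pow_two, Complex.mul_re, Complex.mul_im]
  have hz0 : z ≠ 0 := by
    intro h; rw [h] at hzre; simp at hzre; nlinarith
  have habs_pos : 0 < ‖z‖ := by
    simpa using (norm_pos_iff.mpr hz0)
  have hnsq : Complex.normSq z = (ω^2)^2 + (k*ω)^2 := by
    rw [Complex.normSq_apply, hzre, hzim]; ring
  have habs_lb : ω^2 ≤ ‖z‖ := by
    rw [Complex.norm_def, hnsq]
    calc ω^2 = Real.sqrt ((ω^2)^2) := by rw [Real.sqrt_sq (by positivity)]
      _ ≤ _ := Real.sqrt_le_sqrt (by nlinarith)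
  have habs_ub : ‖z‖ ≤ M * ω^2 := by
    rw [Complex.norm_def, hnsq]
    calc Real.sqrt ((ω^2)^2 + (k*ω)^2) ≤ Real.sqrt ((1+k^2) * (ω^2)^2) := by
          apply Real.sqrt_le_sqrt
          have h1 : 1 ≤ ω^2 := by nlinarith
          have hω24 : ω^2 ≤ (ω^2)^2 := by nlinarith [sq_nonneg ω]
          nlinarith [mul_le_mul_of_nonneg_left hω24 (sq_nonneg k)]
      _ = M * ω^2 := by
          rw [Real.sqrt_mul (by positivity), Real.sqrt_sq (by positivity)]
  -- the angle
  set θ : ℝ := -Complex.arg z with hθdef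
  have hθ1 : 0 < θ := by
    rw [hθdef, neg_pos]; exact Complex.arg_neg_iff.mpr (by rw [hzim]; nlinarith)
  have hθ2 : θ < π/2 := by
    rw [hθdef, neg_lt]
    exact Complex.neg_pi_div_two_lt_arg_iff.mpr (Or.inl (by rw [hzre]; positivity))
  have hsinθ : Real.sin θ = k*ω / ‖z‖ := by
    rw [hθdef, Real.sin_neg, Complex.sin_arg, hzim]; field_simp
  have hcosθ : Real.cos θ = ω^2 / ‖z‖ := by
    rw [hθdef, Real.cos_neg, Complex.cos_arg hz0, hzre]
  have htanθ : Real.tan θ = k/ω := by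
    rw [Real.tan_eq_sin_div_cos, hsinθ, hcosθ]
    field_simp
  have hθub : θ ≤ k/ω := by
    rw [← htanθ]; exact (Real.lt_tan hθ1 hθ2).le
  have hθlb : k/(M*ω) ≤ θ := by
    have h1 : Real.sin θ ≤ θ := (Real.sin_lt hθ1).le
    have h2 : k*ω/(M*ω^2) ≤ k*ω/(‖z‖) := by
      apply div_le_div_of_nonneg_left (by positivity) habs_pos habs_ub
    have h3 : k*ω/(M*ω^2) = k/(M*ω) := by field_simp
    have h2' : k/(M*ω) ≤ Real.sin θ := by rw [hsinθ, ← h3]; exact h2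
    linarith
  -- quarter angle bounds
  have hx1 : θ/4 ≤ 1 := by nlinarith [Real.pi_lt_d2]
  have hcoslb : (1:ℝ)/2 ≤ Real.cos (θ/4) := by
    have h := Real.one_sub_sq_div_two_le_cos (x := θ/4)
    have hsq : (θ/4)^2 ≤ 1 := by nlinarith
    linarith
  have hcosub : Real.cos (θ/4) ≤ 1 := Real.cos_le_one _
  have hsinlb : 3/4*(θ/4) ≤ Real.sin (θ/4) := by
    have h := Real.sin_gt_sub_cube (by linarith : 0 < θ/4)
    have hcube : (θ/4)^3 ≤ θ/4 := by
      nlinarith [mul_nonneg (mul_nonneg (by linarith : (0:ℝ) ≤ θ/4) (by linarith : (0:ℝ) ≤ 1 - θ/4)) (by linarith : (0:ℝ) ≤ 1 + θ/4)]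
    linarith
  have hsinub : Real.sin (θ/4) ≤ θ/4 := (Real.sin_lt (by linarith)).le
  have hsinnn : 0 ≤ Real.sin (θ/4) := le_trans (by linarith) hsinlb
  -- modulus factor
  set A : ℝ := Real.exp (Real.log (‖z‖) / 4) with hAdef
  have hApos : 0 < A := Real.exp_pos _
  have hAr : A = (‖z‖) ^ ((1:ℝ)/4) := by
    rw [hAdef, Real.rpow_def_of_pos habs_pos]; ring_nf
  have hA1 : Real.sqrt ω ≤ A := by
    rw [hAr, ← aux_rpow_quarter ω hω0.le]
    exact Real.rpow_le_rpow (by positivity) habs_lb (by norm_num)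
  have hA2 : A ≤ M ^ ((1:ℝ)/4) * Real.sqrt ω := by
    rw [hAr, ← aux_rpow_quarter ω hω0.le, ← Real.mul_rpow hM.le (by positivity)]
    exact Real.rpow_le_rpow habs_pos.le habs_ub (by norm_num)
  -- re and im values
  have hval : alphaWN β κ γ ω = (c:ℂ) * Complex.exp ((1/4:ℂ) * Complex.log z) := rfl
  have h14 : (1/4:ℂ) = ((1/4:ℝ):ℂ) := by norm_num
  have hwre : ((1/4:ℂ) * Complex.log z).re = Real.log (‖z‖) / 4 := by
    rw [h14, Complex.re_ofReal_mul, Complex.log_re]; ring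
  have hwim : ((1/4:ℂ) * Complex.log z).im = -(θ/4) := by
    rw [h14, Complex.im_ofReal_mul, Complex.log_im, hθdef]; ring
  have hre_val : (alphaWN β κ γ ω).re = c * (A * Real.cos (θ/4)) := by
    rw [hval, Complex.re_ofReal_mul, Complex.exp_re, hwre, hwim, Real.cos_neg, hAdef]
  have him_val : (alphaWN β κ γ ω).im = -(c * (A * Real.sin (θ/4))) := by
    rw [hval, Complex.im_ofReal_mul, Complex.exp_im, hwre, hwim, Real.sin_neg, hAdef]
    ring
  refine ⟨?_, ?_, ?_, ?_⟩
  · -- lower bound on re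
    rw [hre_val]
    calc c/2 * Real.sqrt ω = c * (Real.sqrt ω * (1/2)) := by ring
      _ ≤ c * (A * Real.cos (θ/4)) := by
          apply mul_le_mul_of_nonneg_left _ hc.le
          exact mul_le_mul hA1 hcoslb (by norm_num) hApos.le
  · -- upper bound on re
    rw [hre_val]
    calc c * (A * Real.cos (θ/4)) ≤ c * ((M ^ ((1:ℝ)/4) * Real.sqrt ω) * 1) := by
          apply mul_le_mul_of_nonneg_left _ hc.le
          exact mul_le_mul hA2 hcosub (by linarith) (by positivity)
      _ = c * M ^ ((1:ℝ)/4) * Real.sqrt ω := by ring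
  · -- lower bound on -im
    rw [him_val, neg_neg, div_le_iff₀ hs]
    have hsin3 : 3*k/(16*(M*ω)) ≤ Real.sin (θ/4) := by
      calc 3*k/(16*(M*ω)) = 3/4*((k/(M*ω))/4) := by ring
        _ ≤ 3/4*(θ/4) := by linarith
        _ ≤ _ := hsinlb
    have key : c * (Real.sqrt ω * (3*k/(16*(M*ω)))) * Real.sqrt ω = 3*c*k/(16*M) := by
      have h : c * (Real.sqrt ω * (3*k/(16*(M*ω)))) * Real.sqrt ω
          = c * ((Real.sqrt ω * Real.sqrt ω) * (3*k/(16*(M*ω)))) := by ring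
      rw [h, hss]; field_simp
    rw [← key]
    apply mul_le_mul_of_nonneg_right _ hs.le
    apply mul_le_mul_of_nonneg_left _ hc.le
    exact mul_le_mul hA1 hsin3 (by positivity) hApos.le
  · -- upper bound on -im
    rw [him_val, neg_neg, le_div_iff₀ hs]
    have hsinkub : Real.sin (θ/4) ≤ k/(4*ω) := by
      calc Real.sin (θ/4) ≤ θ/4 := hsinub
        _ ≤ (k/ω)/4 := by linarith
        _ = k/(4*ω) := by ring
    have key : c * ((M ^ ((1:ℝ)/4) * Real.sqrt ω) * (k/(4*ω))) * Real.sqrt ω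
        = c * M ^ ((1:ℝ)/4) * k / 4 := by
      have h : c * ((M ^ ((1:ℝ)/4) * Real.sqrt ω) * (k/(4*ω))) * Real.sqrt ω
          = c * (M ^ ((1:ℝ)/4) * ((Real.sqrt ω * Real.sqrt ω) * (k/(4*ω)))) := by ring
      rw [h, hss]; field_simp
    rw [← key]
    apply mul_le_mul_of_nonneg_right _ hs.le
    apply mul_le_mul_of_nonneg_left _ hc.le
    exact mul_le_mul hA2 hsinkub hsinnn (by positivity)
end

section
/- Let β, κ, γ > 0 and for ω > 0 let α(ω) = (β/κ)^{1/4}·(ω² − i(γ/β)ω)^{1/4} ∈ ℂ, where z^{1/4} = exp((1/4)·Log z) denotes the principal fourth root. Then |cosh(α(ω))·cos(α(ω))| → ∞ as ω → ∞; that is, for every R > 0 there exists ω₀ > 0 such that |cosh(α(ω))·cos(α(ω))| ≥ R for all ω ≥ ω₀. -/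
open Real Complex

lemma myCoshEq (z : ℂ) : Complex.cosh z =
    (Real.cosh z.re * Real.cos z.im : ℝ) + (Real.sinh z.re * Real.sin z.im : ℝ) * Complex.I := by
  have h : Complex.cosh z = Complex.cos (z * Complex.I) := (Complex.cos_mul_I z).symm
  rw [h, Complex.cos_eq]
  simp [Complex.mul_re, Complex.mul_im, Complex.ofReal_cos, Complex.ofReal_sin,
    Complex.ofReal_cosh, Complex.ofReal_sinh, Real.cos_neg, Real.sin_neg]
  push_cast
  ring

lemma myCosEq (z : ℂ) : Complex.cos z =
    (Real.cos z.re * Real.cosh z.im : ℝ) - (Real.sin z.re * Real.sinh z.im : ℝ) * Complex.I := by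
  rw [Complex.cos_eq]
  push_cast [Complex.ofReal_cos, Complex.ofReal_sin, Complex.ofReal_cosh, Complex.ofReal_sinh]
  try ring

lemma sq_le_imp_le {a b : ℝ} (ha : 0 ≤ a) (hb : 0 ≤ b) (h : a^2 ≤ b^2) : a ≤ b := by
  nlinarith

lemma abs_cosh_ge (z : ℂ) : Real.sinh |z.re| ≤ ‖Complex.cosh z‖ := by
  apply sq_le_imp_le (Real.sinh_nonneg_iff.2 (abs_nonneg _)) (norm_nonneg _)
  rw [Complex.sq_norm, Complex.normSq_apply, myCoshEq]
  simp only [Complex.add_re, Complex.add_im, Complex.ofReal_re, Complex.ofReal_im,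
    Complex.mul_re, Complex.mul_im, Complex.I_re, Complex.I_im]
  have h1 : Real.cosh z.re ^ 2 = Real.sinh z.re ^ 2 + 1 := Real.cosh_sq z.re
  have h2 : Real.sin z.im ^ 2 + Real.cos z.im ^ 2 = 1 := Real.sin_sq_add_cos_sq z.im
  have h3 : Real.sinh |z.re| ^ 2 = Real.sinh z.re ^ 2 := by
    rw [← Real.abs_sinh]; exact sq_abs _
  nlinarith

lemma abs_cos_ge (z : ℂ) : |z.im| ≤ ‖Complex.cos z‖ := by
  apply sq_le_imp_le (abs_nonneg _) (norm_nonneg _)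
  rw [Complex.sq_norm, Complex.normSq_apply, myCosEq]
  simp only [Complex.sub_re, Complex.sub_im, Complex.ofReal_re, Complex.ofReal_im,
    Complex.mul_re, Complex.mul_im, Complex.I_re, Complex.I_im]
  have h1 : Real.cosh z.im ^ 2 = Real.sinh z.im ^ 2 + 1 := Real.cosh_sq z.im
  have h2 : Real.sin z.re ^ 2 + Real.cos z.re ^ 2 = 1 := Real.sin_sq_add_cos_sq z.re
  have h4 : |z.im| ≤ |Real.sinh z.im| := by
    rw [Real.abs_sinh]; exact (Real.self_le_sinh_iff.2 (abs_nonneg _))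
  have h5 : z.im ^2 ≤ Real.sinh z.im ^ 2 := by
    nlinarith [mul_self_le_mul_self (abs_nonneg z.im) h4, _root_.sq_abs z.im,
      _root_.sq_abs (Real.sinh z.im)]
  nlinarith [h1, h2, h5, _root_.sq_abs z.im, sq_nonneg (Real.cos z.re),
    sq_nonneg (Real.cos z.re * Real.cosh z.im), sq_nonneg (Real.sin z.re * Real.sinh z.im),
    mul_le_mul_of_nonneg_left h5 (sq_nonneg (Real.sin z.re))]

lemma sinh_ge_cube {x : ℝ} (hx : 4 ≤ x) : x^3/108 ≤ Real.sinh x := by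
  have h1 : 1 + x/3 ≤ Real.exp (x/3) := by
    have := Real.add_one_le_exp (x/3); linarith
  have h2 : (1 + x/3)^3 ≤ (Real.exp (x/3))^3 := by
    apply pow_le_pow_left₀ (by linarith) h1
  have h3 : (Real.exp (x/3))^3 = Real.exp x := by
    rw [← Real.exp_nat_mul]; push_cast; ring_nf
  have h4 : Real.exp (-x) ≤ 1 := Real.exp_le_one_iff.2 (by linarith)
  rw [Real.sinh_eq]
  nlinarith [h2, h3, h4, pow_nonneg (by linarith : (0:ℝ) ≤ x) 3]

set_option maxHeartbeats 1000000 in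
/-- `|cosh(α(ω))·cos(α(ω))| → ∞` as `ω → ∞`. -/
theorem abs_cosh_mul_cos_alphaWN_tendsto_atTop
    (β κ γ : ℝ) (hβ : 0 < β) (hκ : 0 < κ) (hγ : 0 < γ) :
    ∀ R > (0:ℝ), ∃ ω₀ > (0:ℝ), ∀ ω : ℝ, ω₀ ≤ ω →
      R ≤ ‖Complex.cosh (alphaWN β κ γ ω) * Complex.cos (alphaWN β κ γ ω)‖ := by
  intro R hR
  set t : ℝ := γ / β with ht_def
  have ht : 0 < t := div_pos hγ hβ
  set c : ℝ := (β / κ) ^ ((1:ℝ)/4) with hc_def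
  have hc : 0 < c := Real.rpow_pos_of_pos (div_pos hβ hκ) _
  refine ⟨max (max 1 t) (max (64 / c^2) (13824 * R / (c^4 * t))), by positivity, ?_⟩
  intro ω hω
  have hω1 : 1 ≤ ω := le_trans (le_trans (le_max_left 1 t) (le_max_left _ _)) hω
  have hωt : t ≤ ω := le_trans (le_trans (le_max_right 1 t) (le_max_left _ _)) hω
  have hωc : 64 / c^2 ≤ ω := le_trans (le_trans (le_max_left _ _) (le_max_right _ _)) hω
  have hωR : 13824 * R / (c^4 * t) ≤ ω :=
    le_trans (le_trans (le_max_right _ _) (le_max_right _ _)) hω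
  have hω0 : 0 < ω := lt_of_lt_of_le one_pos hω1
  set z : ℂ := (ω:ℂ) ^ 2 - Complex.I * ((γ:ℂ) / (β:ℂ)) * (ω:ℂ) with hz_def
  have hγβ : ((γ:ℂ) / (β:ℂ)) = ((t : ℝ) : ℂ) := by rw [ht_def]; push_cast; ring
  have hzre : z.re = ω ^ 2 := by
    rw [hz_def, hγβ]; simp [Complex.mul_re, Complex.mul_im, ← Complex.ofReal_pow]
  have hzim : z.im = -(t * ω) := by
    rw [hz_def, hγβ]; simp [Complex.mul_re, Complex.mul_im, ← Complex.ofReal_pow]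
  set r : ℝ := ‖z‖ with hr_def
  have hr2 : ω ^ 2 ≤ r := by
    have := Complex.abs_re_le_norm z
    rw [hzre] at this
    calc ω ^ 2 = |ω ^ 2| := (_root_.abs_of_nonneg (by positivity)).symm
    _ ≤ r := this
  have hrpos : 0 < r := lt_of_lt_of_le (by positivity) hr2
  have hrub : r ≤ 2 * ω ^ 2 := by
    have := Complex.norm_le_abs_re_add_abs_im z
    rw [hzre, hzim] at this
    have h1 : |ω ^ 2| = ω ^ 2 := _root_.abs_of_nonneg (by positivity)
    have h2 : |(-(t * ω))| = t * ω := by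
      rw [abs_neg]; exact _root_.abs_of_nonneg (by positivity)
    rw [h1, h2] at this
    nlinarith
  -- the argument
  set φ : ℝ := Real.arcsin (t * ω / r) with hφ_def
  have htω1 : t * ω / r ≤ 1 := by
    rw [div_le_one hrpos]; nlinarith
  have htωpos : 0 < t * ω / r := by positivity
  have hφpos : 0 < φ := Real.arcsin_pos.2 htωpos
  have hφle : φ ≤ π / 2 := Real.arcsin_le_pi_div_two _
  have hθ : Complex.arg z = -φ := by
    rw [Complex.arg_of_re_nonneg (by rw [hzre]; positivity), hzim, ← hr_def, neg_div,
      Real.arcsin_neg, hφ_def]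
  have hφlb : t / (2 * ω) ≤ φ := by
    have h1 : t * ω / r ≤ φ := by
      have := Real.sin_le hφpos.le
      rw [hφ_def, Real.sin_arcsin (by linarith) htω1] at this
      linarith [Real.sin_arcsin (show (-1:ℝ) ≤ t * ω / r by linarith) htω1]
    have h2 : t / (2 * ω) ≤ t * ω / r := by
      rw [div_le_div_iff₀ (by positivity) hrpos]
      nlinarith
    linarith
  -- real and imaginary part of alpha
  set E : ℝ := Real.exp ((1/4) * Real.log r) with hE_def
  set α : ℂ := alphaWN β κ γ ω with hα_def
  have hw : ((1/4 : ℂ) * Complex.log z).re = (1/4) * Real.log r ∧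
      ((1/4 : ℂ) * Complex.log z).im = (1/4) * (-φ) := by
    constructor <;>
      simp [Complex.mul_re, Complex.mul_im, Complex.log_re, Complex.log_im, hθ, ← hr_def] <;>
      norm_num
  have hare : α.re = c * (E * Real.cos ((1/4) * (-φ))) := by
    rw [hα_def, alphaWN, Complex.re_ofReal_mul, Complex.exp_re, hw.1, hw.2, hE_def]
  have haim : α.im = c * (E * Real.sin ((1/4) * (-φ))) := by
    rw [hα_def, alphaWN, Complex.im_ofReal_mul, Complex.exp_im, hw.1, hw.2, hE_def]
  clear_value α z t c r φ E
  -- bound E from below by sqrt ω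
  set s : ℝ := Real.sqrt ω with hs_def
  have hs1 : 1 ≤ s := by
    have := Real.sqrt_le_sqrt hω1
    rwa [Real.sqrt_one] at this
  have hss : s ^ 2 = ω := Real.sq_sqrt hω0.le
  have hspos : 0 < s := lt_of_lt_of_le one_pos hs1
  clear_value s
  have hE : s ≤ E := by
    have hlog : Real.log (ω ^ 2) ≤ Real.log r := (Real.log_le_log_iff (by positivity) hrpos).2 hr2
    rw [Real.log_pow] at hlog
    have : Real.exp ((1/2) * Real.log ω) ≤ E := by
      rw [hE_def]; apply Real.exp_le_exp.2; push_cast at hlog ⊢; linarith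
    calc s = ω ^ ((1:ℝ)/2) := by rw [hs_def, Real.sqrt_eq_rpow]
    _ = Real.exp (Real.log ω * (1/2)) := Real.rpow_def_of_pos hω0 _
    _ ≤ E := by rwa [mul_comm] at this
  have hEpos : 0 < E := by rw [hE_def]; exact Real.exp_pos _
  -- cos bound
  have hcos : 1/2 ≤ Real.cos ((1/4) * (-φ)) := by
    have h1 : Real.cos (π/3) ≤ Real.cos (φ/4) := by
      apply Real.cos_le_cos_of_nonneg_of_le_pi (by positivity)
        (by linarith [Real.pi_pos]) (by linarith [Real.pi_le_four])
    rw [Real.cos_pi_div_three] at h1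
    have : (1/4) * (-φ) = -(φ/4) := by ring
    rw [this, Real.cos_neg]
    exact h1
  -- sin bound
  have hsin : t / (16 * ω) ≤ Real.sin (φ/4) := by
    have h4 : φ/4 ≤ 1 := by linarith [Real.pi_le_four]
    have hcube := Real.sin_gt_sub_cube (x := φ/4) (by positivity)
    have hφ2 : φ ≤ 2 := by linarith [Real.pi_le_four]
    have hφsq : φ^2 ≤ 4 := by nlinarith
    have h5 : φ/8 ≤ φ/4 - (φ/4)^3/4 := by nlinarith [mul_nonneg hφpos.le hφpos.le]
    have h6 : t / (2*ω) = 8 * (t / (16*ω)) := by ring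
    linarith [pow_pos (by positivity : (0:ℝ) < φ/4) 3]
  -- lower bound for the real part
  have hxlb : c * s / 2 ≤ α.re := by
    rw [hare]
    have h1 : s * (1/2) ≤ E * Real.cos ((1/4) * (-φ)) := by
      apply mul_le_mul hE hcos (by norm_num) hEpos.le
    nlinarith
  have hx4 : 4 ≤ c * s / 2 := by
    have h8 : 8 / c ≤ s := by
      apply sq_le_imp_le (by positivity) (by positivity)
      have h9 : (8/c)^2 = 64 / c^2 := by rw [div_pow]; norm_num
      rw [h9, hss]; exact hωc
    rw [div_le_iff₀ hc] at h8
    nlinarith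
  -- lower bound for |imaginary part|
  have hylb : c * t / (16 * s) ≤ |α.im| := by
    rw [haim]
    have heq : (1/4) * (-φ) = -(φ/4) := by ring
    rw [heq, Real.sin_neg]
    have hsinpos : 0 < Real.sin (φ/4) := by
      apply Real.sin_pos_of_pos_of_lt_pi (by positivity)
      nlinarith [Real.pi_gt_three]
    rw [abs_of_nonpos (by nlinarith), neg_mul_eq_mul_neg]
    have h1 : E * Real.sin (φ/4) ≥ s * (t / (16 * ω)) :=
      mul_le_mul hE hsin (by positivity) hEpos.le
    have h2 : s * (t / (16 * ω)) = t / (16 * s) := by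
      rw [← hss]; field_simp
    have h3 : c * (t / (16 * s)) ≤ c * (E * Real.sin (φ/4)) :=
      mul_le_mul_of_nonneg_left (le_trans (le_of_eq h2.symm) h1) hc.le
    calc c * t / (16 * s) = c * (t / (16 * s)) := by ring
    _ ≤ c * (E * Real.sin (φ/4)) := h3
    _ = c * -(E * -Real.sin (φ/4)) := by ring
  -- put everything together
  have hcoshb : Real.sinh (c * s / 2) ≤ ‖Complex.cosh α‖ := by
    have h1 := abs_cosh_ge α
    rw [_root_.abs_of_nonneg (by linarith : (0:ℝ) ≤ α.re)] at h1
    exact le_trans (Real.sinh_le_sinh.2 hxlb) h1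
  have hcosb : c * t / (16 * s) ≤ ‖Complex.cos α‖ :=
    le_trans hylb (abs_cos_ge α)
  have hsinhb : (c * s / 2)^3 / 108 ≤ Real.sinh (c * s / 2) := sinh_ge_cube hx4
  rw [norm_mul]
  have hfinal : (c * s / 2)^3 / 108 * (c * t / (16 * s)) ≤
      ‖Complex.cosh α‖ * ‖Complex.cos α‖ := by
    apply mul_le_mul (le_trans hsinhb hcoshb) hcosb (by positivity)
    exact (norm_nonneg _)
  have hval : (c * s / 2)^3 / 108 * (c * t / (16 * s)) = c^4 * t * ω / 13824 := by
    rw [← hss]; field_simp; ring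
  rw [hval] at hfinal
  have hpos4 : (0:ℝ) < c^4 * t := by positivity
  have hRle : R ≤ c^4 * t * ω / 13824 := by
    rw [div_le_iff₀ hpos4] at hωR
    rw [le_div_iff₀ (by norm_num : (0:ℝ) < 13824)]
    linarith
  linarith
end

section
/- Let β, κ, γ > 0 and for ω > 0 let α(ω) = (β/κ)^{1/4}·(ω² − i(γ/β)ω)^{1/4} ∈ ℂ, where z^{1/4} = exp((1/4)·Log z) denotes the principal fourth root. Then there exist ω₀ > 0 and M > 0 such that for all ω ≥ ω₀: 1 + cosh(α(ω))·cos(α(ω)) ≠ 0 and |sinh(α(ω))·sin(α(ω)) / (1 + cosh(α(ω))·cos(α(ω)))| ≤ M·√ω. -/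
set_option maxHeartbeats 1000000

lemma coshcos_id (α : ℂ) : Complex.cosh α * Complex.cos α
    = (Complex.cosh (α + α*Complex.I) + Complex.cosh (α - α*Complex.I))/2 := by
  rw [Complex.cosh_add, Complex.cosh_sub, Complex.cosh_mul_I, Complex.sinh_mul_I]; ring

lemma sinhsin_id (α : ℂ) : Complex.sinh α * Complex.sin α * (2*Complex.I)
    = Complex.cosh (α + α*Complex.I) - Complex.cosh (α - α*Complex.I) := by
  rw [Complex.cosh_add, Complex.cosh_sub, Complex.cosh_mul_I, Complex.sinh_mul_I]; ring

lemma abs_cosh_le (w : ℂ) : ‖Complex.cosh w‖ ≤ (Real.exp w.re + Real.exp (-w.re))/2 := by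
  rw [show Complex.cosh w = (Complex.exp w + Complex.exp (-w))/2 from rfl]
  calc ‖(Complex.exp w + Complex.exp (-w))/2‖
      ≤ (‖Complex.exp w‖ + ‖Complex.exp (-w)‖)/2 := by
        rw [norm_div, show ‖(2:ℂ)‖ = 2 by simp]; gcongr; exact norm_add_le _ _
    _ = (Real.exp w.re + Real.exp (-w.re))/2 := by rw [Complex.norm_exp, Complex.norm_exp]; simp

lemma abs_cosh_ge_s9 (w : ℂ) : (Real.exp w.re - Real.exp (-w.re))/2 ≤ ‖Complex.cosh w‖ := by
  rw [show Complex.cosh w = (Complex.exp w + Complex.exp (-w))/2 from rfl]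
  calc (Real.exp w.re - Real.exp (-w.re))/2
      = (‖Complex.exp w‖ - ‖Complex.exp (-w)‖)/2 := by
        rw [Complex.norm_exp, Complex.norm_exp]; simp
    _ ≤ ‖Complex.exp w + Complex.exp (-w)‖/2 := by
        gcongr
        have h := norm_add_le (Complex.exp w + Complex.exp (-w)) (-(Complex.exp (-w)))
        rw [add_neg_cancel_right, norm_neg] at h; linarith
    _ = ‖(Complex.exp w + Complex.exp (-w))/2‖ := by rw [norm_div]; simp

lemma abs_add_lower (a b : ℂ) : ‖a‖ - ‖b‖ ≤ ‖a + b‖ := by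
  have h := norm_add_le (a + b) (-b)
  rw [add_neg_cancel_right, norm_neg] at h; linarith

lemma D_arith (E d cu cv B : ℝ) (hE1 : 1 ≤ E) (hd0 : 0 < d)
    (hcu : (E*(1+d) - 1)/2 ≤ cu) (hcv : cv ≤ (E+1)/2)
    (htri : cu/2 - (1 + cv/2) ≤ B) (h12 : 12 ≤ E*d) : E*d/8 ≤ B := by nlinarith

lemma ratio_arith (E d A B : ℝ) (hd0 : 0 < d) (hd1 : d ≤ 1)
    (hA : A ≤ E * Real.exp d) (hB : E*d/8 ≤ B) (hE1 : 1 ≤ E) : A / B ≤ 24 / d := by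
  have hB0 : (0:ℝ) < B := lt_of_lt_of_le (by positivity) hB
  rw [div_le_div_iff₀ hB0 hd0]
  have h3 : Real.exp d ≤ 3 := by
    calc Real.exp d ≤ Real.exp 1 := Real.exp_le_exp.mpr hd1
      _ ≤ 3 := by linarith [Real.exp_one_lt_d9]
  calc A * d ≤ E * Real.exp d * d := by nlinarith
    _ ≤ 3 * (E * d) := by
        have hE0 : (0:ℝ) ≤ E := by linarith
        have h := mul_le_mul_of_nonneg_right (mul_le_mul_of_nonneg_left h3 hE0) hd0.le
        linarith [h]
    _ = 24 * (E*d/8) := by ring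
    _ ≤ 24 * B := by linarith

lemma main_est (α : ℂ) (hy : α.im < 0) (hd1 : -2*α.im ≤ 1) (hb : 0 ≤ α.re + α.im)
    (h12 : 12 ≤ Real.exp (α.re + α.im) * (-2*α.im)) :
    1 + Complex.cosh α * Complex.cos α ≠ 0 ∧
    ‖Complex.sinh α * Complex.sin α / (1 + Complex.cosh α * Complex.cos α)‖
      ≤ 24/(-2*α.im) := by
  have hure : (α + α*Complex.I).re = (α.re + α.im) + (-2*α.im) := by
    simp [Complex.add_re, Complex.mul_re]; ring
  have hvre : (α - α*Complex.I).re = α.re + α.im := by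
    simp [Complex.sub_re, Complex.mul_re]
  have hd0 : (0:ℝ) < -2*α.im := by linarith
  have hE1 : (1:ℝ) ≤ Real.exp (α.re + α.im) := Real.one_le_exp hb
  have hEd1 : (1:ℝ) ≤ Real.exp (-2*α.im) := Real.one_le_exp (by linarith)
  have hexpna : Real.exp (-(α.re + α.im + -2*α.im)) ≤ 1 :=
    Real.exp_le_one_iff.mpr (by linarith)
  have hexpnb : Real.exp (-(α.re + α.im)) ≤ 1 :=
    Real.exp_le_one_iff.mpr (by linarith)
  have hsplit : Real.exp (α.re + α.im + -2*α.im)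
      = Real.exp (α.re + α.im) * Real.exp (-2*α.im) := Real.exp_add _ _
  have hcu : (Real.exp (α.re + α.im) * (1 + -2*α.im) - 1)/2
      ≤ ‖Complex.cosh (α + α*Complex.I)‖ := by
    refine le_trans ?_ (abs_cosh_ge_s9 _)
    rw [hure, hsplit]
    have h1d : 1 + -2*α.im ≤ Real.exp (-2*α.im) := by linarith [Real.add_one_le_exp (-2*α.im)]
    nlinarith [Real.exp_pos (α.re + α.im)]
  have hcuu : ‖Complex.cosh (α + α*Complex.I)‖
      ≤ (Real.exp (α.re + α.im) * Real.exp (-2*α.im) + 1)/2 := by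
    refine le_trans (abs_cosh_le _) ?_
    rw [hure, hsplit]; linarith
  have hcv : ‖Complex.cosh (α - α*Complex.I)‖ ≤ (Real.exp (α.re + α.im) + 1)/2 := by
    refine le_trans (abs_cosh_le _) ?_
    rw [hvre]; linarith
  have hD : 1 + Complex.cosh α * Complex.cos α
      = Complex.cosh (α + α*Complex.I) / 2 + (1 + Complex.cosh (α - α*Complex.I) / 2) := by
    rw [coshcos_id]; ring
  have htri : ‖Complex.cosh (α + α*Complex.I)‖/2
      - (1 + ‖Complex.cosh (α - α*Complex.I)‖/2)
      ≤ ‖1 + Complex.cosh α * Complex.cos α‖ := by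
    rw [hD]
    have h := abs_add_lower (Complex.cosh (α + α*Complex.I) / 2)
      (1 + Complex.cosh (α - α*Complex.I) / 2)
    have h1 : ‖Complex.cosh (α + α*Complex.I) / 2‖
        = ‖Complex.cosh (α + α*Complex.I)‖/2 := by rw [norm_div]; simp
    have h2 : ‖1 + Complex.cosh (α - α*Complex.I) / 2‖
        ≤ 1 + ‖Complex.cosh (α - α*Complex.I)‖/2 := by
      refine le_trans (norm_add_le _ _) ?_
      rw [norm_div]; simp
    linarith
  have habsD : Real.exp (α.re + α.im) * (-2*α.im)/8
      ≤ ‖1 + Complex.cosh α * Complex.cos α‖ :=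
    D_arith _ _ _ _ _ hE1 hd0 hcu hcv htri h12
  have hDne : 1 + Complex.cosh α * Complex.cos α ≠ 0 := by
    intro h0
    rw [h0, norm_zero] at habsD
    nlinarith
  refine ⟨hDne, ?_⟩
  have habsN : ‖Complex.sinh α * Complex.sin α‖
      ≤ Real.exp (α.re + α.im) * Real.exp (-2*α.im) := by
    have h := congrArg (‖·‖) (sinhsin_id α)
    rw [norm_mul] at h
    have h2I : ‖2*Complex.I‖ = 2 := by simp
    rw [h2I] at h
    have htri2 : ‖Complex.cosh (α + α*Complex.I) - Complex.cosh (α - α*Complex.I)‖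
        ≤ ‖Complex.cosh (α + α*Complex.I)‖
          + ‖Complex.cosh (α - α*Complex.I)‖ := by
      have := norm_add_le (Complex.cosh (α + α*Complex.I))
        (-(Complex.cosh (α - α*Complex.I)))
      simpa [sub_eq_add_neg] using this
    nlinarith [norm_nonneg (Complex.sinh α * Complex.sin α)]
  rw [norm_div]
  exact ratio_arith _ _ _ _ hd0 hd1 habsN habsD hE1

lemma key1 (c δ s ω : ℝ) (hs : 0 < s) (hω : 0 < ω) (hsq : s*s = ω) :
    2*(c*(s*(δ/(16*ω)))) = c*δ/(8*s) := by
  field_simp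
  linear_combination 16*c*δ*hsq

lemma key2 (c δ s ω : ℝ) (hs : 0 < s) (hω : 0 < ω) (hsq : s*s = ω) :
    c*s*(2*δ/ω) = 2*c*δ/s := by
  field_simp
  linear_combination c*δ*hsq

lemma key3 (c δ s ω : ℝ) (hs : 0 < s) (hω : 0 < ω) (hsq : s*s = ω) :
    (c*s/12)^3*(c*δ/(8*s)) = c^4*δ*ω/13824 := by
  field_simp
  linear_combination 13824*c^4*δ*hsq

lemma key4 (c δ s : ℝ) (hc : 0 < c) (hδ : 0 < δ) (hs : 0 < s) :
    24/(c*δ/(8*s)) = 192/(c*δ)*s := by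
  field_simp
  ring

lemma key5 (c δ ω : ℝ) (hc : 0 < c) (hδ : 0 < δ) (h : 165888/(c^4*δ) ≤ ω) :
    12 ≤ c^4*δ*ω/13824 := by
  rw [div_le_iff₀ (by positivity)] at h
  rw [le_div_iff₀ (by norm_num : (0:ℝ) < 13824)]
  nlinarith only [h]

/-- For large `ω`, `1 + cosh(α(ω))cos(α(ω)) ≠ 0` and
`|sinh(α(ω))sin(α(ω))/(1 + cosh(α(ω))cos(α(ω)))| ≤ M√ω`. -/
theorem sinh_sin_div_one_add_cosh_cos_bound
    (β κ γ : ℝ) (hβ : 0 < β) (hκ : 0 < κ) (hγ : 0 < γ) :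
    ∃ ω₀ > (0:ℝ), ∃ M > (0:ℝ), ∀ ω : ℝ, ω₀ ≤ ω →
      1 + Complex.cosh (alphaWN β κ γ ω) * Complex.cos (alphaWN β κ γ ω) ≠ 0 ∧
      ‖Complex.sinh (alphaWN β κ γ ω) * Complex.sin (alphaWN β κ γ ω) /
          (1 + Complex.cosh (alphaWN β κ γ ω) * Complex.cos (alphaWN β κ γ ω))‖ ≤
        M * Real.sqrt ω := by
  set δ := γ / β with hδdef
  set c := (β / κ) ^ ((1:ℝ)/4) with hcdef
  have hδ : 0 < δ := by positivity
  have hc : 0 < c := Real.rpow_pos_of_pos (by positivity) _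
  clear_value δ c
  refine ⟨1 + 2*δ + (2*c*δ)^2 + 4/c^2 + 165888/(c^4*δ), by positivity,
    192/(c*δ), by positivity, ?_⟩
  intro ω hω
  -- basic consequences of ω being large
  have ht2 : (0:ℝ) ≤ 2*δ := by positivity
  have ht3 : (0:ℝ) ≤ (2*c*δ)^2 := by positivity
  have ht4 : (0:ℝ) ≤ 4/c^2 := by positivity
  have ht5 : (0:ℝ) ≤ 165888/(c^4*δ) := by positivity
  have hω1 : 1 ≤ ω := by linarith
  have hω0 : 0 < ω := by linarith
  have hωδ : 2*δ ≤ ω := by linarith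
  have hωc : (2*c*δ)^2 ≤ ω := by linarith
  have hωb : 4/c^2 ≤ ω := by linarith
  have hωe : 165888/(c^4*δ) ≤ ω := by linarith
  have hsω : 0 < Real.sqrt ω := Real.sqrt_pos.mpr hω0
  have hsq : Real.sqrt ω * Real.sqrt ω = ω := Real.mul_self_sqrt hω0.le
  have hsωc : 2*c*δ ≤ Real.sqrt ω := by
    by_contra hcon
    push_neg at hcon
    nlinarith [Real.sqrt_nonneg ω, hsq]
  have hsωb : 2/c ≤ Real.sqrt ω := by
    have h4 : (2/c)*(2/c) ≤ ω := by
      have he : (2/c)*(2/c) = 4/c^2 := by field_simp; ring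
      rw [he]; exact hωb
    by_contra hcon
    push_neg at hcon
    nlinarith [Real.sqrt_nonneg ω, hsq]
  -- the complex number z and its re/im
  have hcast : (γ:ℂ) / (β:ℂ) = ((δ:ℝ):ℂ) := by rw [hδdef, Complex.ofReal_div]
  set z : ℂ := (ω:ℂ) ^ 2 - Complex.I * ((γ:ℂ) / (β:ℂ)) * (ω:ℂ) with hz
  have hzre : z.re = ω^2 := by
    rw [hz, hcast]; simp [Complex.mul_re, ← Complex.ofReal_pow]
  have hzim : z.im = -(δ*ω) := by
    rw [hz, hcast]; simp [Complex.mul_im, Complex.mul_re, ← Complex.ofReal_pow]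
  clear_value z
  have hzre0 : 0 ≤ z.re := by rw [hzre]; positivity
  have hzne : z ≠ 0 := by
    intro h0; rw [h0] at hzre; simp at hzre; nlinarith
  have habs0 : 0 < ‖z‖ := norm_pos_iff.mpr hzne
  have habs1 : ω^2 ≤ ‖z‖ := by
    have h := Complex.abs_re_le_norm z
    rwa [hzre, abs_of_nonneg (by positivity)] at h
  have habs2 : ‖z‖ ≤ 2*ω^2 := by
    refine le_trans (Complex.norm_le_abs_re_add_abs_im z) ?_
    rw [hzre, hzim, abs_of_nonneg (by positivity), abs_neg, abs_of_nonneg (by positivity)]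
    nlinarith
  -- the argument
  have harg : Complex.arg z = Real.arcsin (z.im / ‖z‖) := by
    rw [Complex.arg, if_pos hzre0]
  set s := δ*ω / ‖z‖ with hsdef
  have hs0 : 0 < s := by positivity
  have hs12 : s ≤ 1/2 := by
    rw [hsdef, div_le_iff₀ habs0]
    nlinarith
  clear_value s
  have hargz : Complex.arg z = -Real.arcsin s := by
    rw [harg, hzim, neg_div, Real.arcsin_neg, hsdef]
  set θ := Real.arcsin s with hθdef
  have hθ0 : 0 < θ := Real.arcsin_pos.mpr hs0
  have hθpi2 : θ < Real.pi/2 := Real.arcsin_lt_pi_div_two.mpr (by linarith)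
  have hsinθ : Real.sin θ = s := Real.sin_arcsin (by linarith) (by linarith)
  have hcosθ : (1:ℝ)/2 ≤ Real.cos θ := by
    rw [hθdef, Real.cos_arcsin]
    have h14 : (1:ℝ)/4 ≤ 1 - s^2 := by nlinarith
    calc (1:ℝ)/2 = Real.sqrt (1/4) := by
          rw [show (1/4:ℝ) = (1/2)^2 by norm_num, Real.sqrt_sq (by norm_num)]
      _ ≤ Real.sqrt (1 - s^2) := Real.sqrt_le_sqrt h14
  clear_value θ
  have hθlow : δ/(2*ω) ≤ θ := by
    have h1 : Real.sin θ ≤ θ := Real.sin_le hθ0.le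
    have h2 : δ/(2*ω) ≤ s := by
      rw [hsdef, div_le_div_iff₀ (by positivity) habs0]
      nlinarith
    have h1' : s ≤ θ := by rw [← hsinθ]; exact h1
    linarith
  have hθhigh : θ ≤ 2*δ/ω := by
    have h1 : θ < Real.tan θ := Real.lt_tan hθ0 hθpi2
    rw [Real.tan_eq_sin_div_cos, hsinθ] at h1
    have hcos0 : 0 < Real.cos θ := by linarith
    rw [lt_div_iff₀ hcos0] at h1
    have h2 : s ≤ δ/ω := by
      rw [hsdef, div_le_div_iff₀ habs0 hω0]
      nlinarith
    have h3 : θ * (1/2) ≤ θ * Real.cos θ := by nlinarith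
    have h4 : θ ≤ 2*(δ/ω) := by nlinarith
    rw [mul_div_assoc]
    exact h4
  have hθ1 : θ ≤ 1 := by
    have : 2*δ/ω ≤ 1 := by rw [div_le_one hω0]; linarith
    linarith
  -- the modulus factor R
  set R := Real.exp (Real.log (‖z‖) / 4) with hRdef
  have hR0 : 0 < R := Real.exp_pos _
  have hlog1 : 2 * Real.log ω ≤ Real.log (‖z‖) := by
    calc 2 * Real.log ω = Real.log (ω^2) := by
          rw [Real.log_pow]; norm_num
      _ ≤ Real.log (‖z‖) := Real.log_le_log (by positivity) habs1
  have hlog2 : Real.log (‖z‖) ≤ Real.log 2 + 2 * Real.log ω := by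
    calc Real.log (‖z‖) ≤ Real.log (2*ω^2) := Real.log_le_log habs0 habs2
      _ = Real.log 2 + 2 * Real.log ω := by
          rw [Real.log_mul (by norm_num) (by positivity), Real.log_pow]; norm_num
  have hsqrt_exp : Real.sqrt ω = Real.exp (Real.log ω * (1/2)) := by
    rw [Real.sqrt_eq_rpow, Real.rpow_def_of_pos hω0]
  have hR1 : Real.sqrt ω ≤ R := by
    rw [hsqrt_exp, hRdef]
    exact Real.exp_le_exp.mpr (by linarith)
  have hR2 : R ≤ 2 * Real.sqrt ω := by
    have hlog2' : Real.log (‖z‖) / 4 ≤ Real.log 2 / 4 + Real.log ω * (1/2) := by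
      linarith
    calc R ≤ Real.exp (Real.log 2 / 4 + Real.log ω * (1/2)) := Real.exp_le_exp.mpr hlog2'
      _ = Real.exp (Real.log 2 / 4) * Real.exp (Real.log ω * (1/2)) := Real.exp_add _ _
      _ ≤ 2 * Real.sqrt ω := by
          rw [hsqrt_exp]
          have h2 : Real.exp (Real.log 2 / 4) ≤ 2 := by
            have hl2 : (0:ℝ) ≤ Real.log 2 := Real.log_nonneg (by norm_num)
            calc Real.exp (Real.log 2 / 4) ≤ Real.exp (Real.log 2) :=
                  Real.exp_le_exp.mpr (by linarith)
              _ = 2 := Real.exp_log (by norm_num)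
          exact mul_le_mul_of_nonneg_right h2 (Real.exp_pos _).le
  clear_value R
  -- re and im of α
  have hlogre : (Complex.log z).re = Real.log (‖z‖) := Complex.log_re z
  have hlogim : (Complex.log z).im = -θ := by rw [Complex.log_im, hargz]
  have hα : alphaWN β κ γ ω = (c:ℂ) * Complex.exp ((1/4:ℂ) * Complex.log z) := by
    rw [alphaWN, hcdef, hz]
  have h14re : ((1/4:ℂ) * Complex.log z).re = Real.log (‖z‖) / 4 := by
    simp [Complex.mul_re, hlogre, hlogim]; ring
  have h14im : ((1/4:ℂ) * Complex.log z).im = -(θ/4) := by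
    simp [Complex.mul_im, hlogre, hlogim]; ring
  have hαre : (alphaWN β κ γ ω).re = c * (R * Real.cos (θ/4)) := by
    rw [hα, Complex.re_ofReal_mul, Complex.exp_re, h14re, h14im, Real.cos_neg, hRdef]
  have hαim : (alphaWN β κ γ ω).im = -(c * (R * Real.sin (θ/4))) := by
    rw [hα, Complex.im_ofReal_mul, Complex.exp_im, h14re, h14im, Real.sin_neg, hRdef]; ring
  -- bounds on sin/cos of θ/4
  have ht0 : 0 < θ/4 := by linarith
  have htpi2 : θ/4 < Real.pi/2 := by
    have := Real.pi_gt_three; linarith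
  have hsint2 : Real.sin (θ/4) ≤ θ/4 := Real.sin_le ht0.le
  have hcost : (1:ℝ)/2 ≤ Real.cos (θ/4) := by
    have h := Real.one_sub_sq_div_two_le_cos (x := θ/4)
    nlinarith only [h, hθ0, hθ1]
  have hcost1 : Real.cos (θ/4) ≤ 1 := Real.cos_le_one _
  have hsint1 : θ/8 ≤ Real.sin (θ/4) := by
    have h1 : θ/4 < Real.tan (θ/4) := Real.lt_tan ht0 htpi2
    rw [Real.tan_eq_sin_div_cos] at h1
    have hcos0 : 0 < Real.cos (θ/4) := by linarith
    rw [lt_div_iff₀ hcos0] at h1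
    nlinarith only [h1, hcost, hθ0]
  have hsint0 : 0 < Real.sin (θ/4) := by linarith
  -- hypotheses of main_est
  have hyneg : (alphaWN β κ γ ω).im < 0 := by
    rw [hαim]; simp; positivity
  have hd_eq : -2 * (alphaWN β κ γ ω).im = 2 * (c * (R * Real.sin (θ/4))) := by
    rw [hαim]; ring
  have hdlow : c*δ/(8*Real.sqrt ω) ≤ 2 * (c * (R * Real.sin (θ/4))) := by
    have h1 : δ/(16*ω) ≤ θ/8 := by
      have he : δ/(16*ω) = (δ/(2*ω))/8 := by ring
      rw [he]; linarith [hθlow]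
    have h2 : δ/(16*ω) ≤ Real.sin (θ/4) := by linarith
    have h3 : 2 * (c * (Real.sqrt ω * (δ/(16*ω)))) ≤ 2 * (c * (R * Real.sin (θ/4))) := by
      gcongr <;> positivity
    have heq : 2 * (c * (Real.sqrt ω * (δ/(16*ω)))) = c*δ/(8*Real.sqrt ω) :=
      key1 c δ _ ω hsω hω0 hsq
    rw [← heq]; exact h3
  have hdhigh : 2 * (c * (R * Real.sin (θ/4))) ≤ 1 := by
    have hmm : R * Real.sin (θ/4) ≤ (2*Real.sqrt ω) * (θ/4) :=
      mul_le_mul hR2 hsint2 hsint0.le (by positivity)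
    have h1 : 2 * (c * (R * Real.sin (θ/4))) ≤ 2 * (c * ((2*Real.sqrt ω) * (θ/4))) := by
      have := mul_le_mul_of_nonneg_left hmm hc.le
      linarith
    have h2 : θ ≤ 2*δ/ω := hθhigh
    have h3 : 2 * (c * ((2*Real.sqrt ω) * (θ/4))) = c * Real.sqrt ω * θ := by ring
    have h4 : c * Real.sqrt ω * θ ≤ c * Real.sqrt ω * (2*δ/ω) :=
      mul_le_mul_of_nonneg_left hθhigh (by positivity)
    have h5 : c * Real.sqrt ω * (2*δ/ω) ≤ 1 := by
      have heq : c * Real.sqrt ω * (2*δ/ω) = 2*c*δ/Real.sqrt ω :=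
        key2 c δ _ ω hsω hω0 hsq
      rw [heq, div_le_one hsω]
      exact hsωc
    linarith
  have hxlow : c * Real.sqrt ω / 2 ≤ (alphaWN β κ γ ω).re := by
    rw [hαre]
    have hmm : Real.sqrt ω * (1/2) ≤ R * Real.cos (θ/4) :=
      mul_le_mul hR1 hcost (by norm_num) hR0.le
    have := mul_le_mul_of_nonneg_left hmm hc.le
    linarith
  have hblow : c * Real.sqrt ω / 4 ≤ (alphaWN β κ γ ω).re + (alphaWN β κ γ ω).im := by
    have hyabs : -(alphaWN β κ γ ω).im ≤ 1/2 := by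
      rw [hαim, neg_neg]; linarith [hdhigh]
    have h2 : (1:ℝ)/2 ≤ c * Real.sqrt ω / 4 := by
      have h2' := mul_le_mul_of_nonneg_left hsωb hc.le
      have he : c*(2/c) = 2 := by field_simp
      rw [he] at h2'
      linarith
    linarith [hxlow]
  have hb0 : 0 ≤ (alphaWN β κ γ ω).re + (alphaWN β κ γ ω).im := by
    have : (0:ℝ) ≤ c * Real.sqrt ω / 4 := by positivity
    linarith
  have h12 : 12 ≤ Real.exp ((alphaWN β κ γ ω).re + (alphaWN β κ γ ω).im)
      * (-2 * (alphaWN β κ γ ω).im) := by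
    set b := (alphaWN β κ γ ω).re + (alphaWN β κ γ ω).im with hbdef
    have hexpb : (b/3)^3 ≤ Real.exp b := by
      have h1 : b/3 ≤ Real.exp (b/3) := by linarith [Real.add_one_le_exp (b/3), Real.exp_pos (b/3)]
      calc (b/3)^3 ≤ (Real.exp (b/3))^3 := by
            apply pow_le_pow_left₀ (by linarith [hblow, hb0]) h1
        _ = Real.exp b := by
            rw [← Real.exp_nat_mul]
            congr 1
            push_cast
            ring
    have hbl : c * Real.sqrt ω / 12 ≤ b/3 := by linarith [hblow]
    have hcb : (c * Real.sqrt ω / 12)^3 ≤ (b/3)^3 := by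
      apply pow_le_pow_left₀ (by positivity) hbl
    have hkey : (c * Real.sqrt ω / 12)^3 * (c*δ/(8*Real.sqrt ω)) = c^4*δ*ω/13824 :=
      key3 c δ _ ω hsω hω0 hsq
    have hprod : c^4*δ*ω/13824 ≤ Real.exp b * (-2 * (alphaWN β κ γ ω).im) := by
      rw [← hkey, hd_eq]
      have hd0' : 0 < c*δ/(8*Real.sqrt ω) := by positivity
      have := mul_le_mul (le_trans hcb hexpb) hdlow hd0'.le (Real.exp_pos b).le
      linarith [this]
    have hfin : 12 ≤ c^4*δ*ω/13824 := key5 c δ ω hc hδ hωe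
    linarith
  obtain ⟨hne, hbound⟩ := main_est (alphaWN β κ γ ω) hyneg (by rw [hd_eq]; exact hdhigh) hb0 h12
  refine ⟨hne, ?_⟩
  refine le_trans hbound ?_
  rw [hd_eq]
  have hdl : c*δ/(8*Real.sqrt ω) ≤ 2 * (c * (R * Real.sin (θ/4))) := hdlow
  have hdl0 : 0 < c*δ/(8*Real.sqrt ω) := by positivity
  calc 24 / (2 * (c * (R * Real.sin (θ/4)))) ≤ 24 / (c*δ/(8*Real.sqrt ω)) := by
        apply div_le_div_of_nonneg_left (by norm_num) hdl0 hdl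
    _ = 192/(c*δ) * Real.sqrt ω := key4 c δ _ hc hδ hsω
end

section
/- Let β, κ, γ > 0 and for ω > 0 let α(ω) = (β/κ)^{1/4}·(ω² − i(γ/β)ω)^{1/4} ∈ ℂ, where z^{1/4} = exp((1/4)·Log z) denotes the principal fourth root. Then there exist ω₀ > 0 and M > 0 such that for all ω ≥ ω₀: sinh(α(ω)) + sin(α(ω)) ≠ 0, |cos(α(ω)) / (sinh(α(ω)) + sin(α(ω)))| ≤ M, and |cosh(α(ω)) / (sinh(α(ω)) + sin(α(ω)))| ≤ M. -/
open Complex Real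

lemma exp_two_ge : (3:ℝ) ≤ Real.exp 2 := by linarith [Real.add_one_le_exp (2:ℝ)]

lemma exp_eight_ge : (26:ℝ) ≤ Real.exp 8 := by
  have h : Real.exp 8 = Real.exp 2 * Real.exp 2 * Real.exp 2 * Real.exp 2 := by
    rw [← Real.exp_add, ← Real.exp_add, ← Real.exp_add]; norm_num
  have h3 := exp_two_ge
  have h9 : (9:ℝ) ≤ Real.exp 2 * Real.exp 2 := by nlinarith
  have h27 : (27:ℝ) ≤ Real.exp 2 * Real.exp 2 * Real.exp 2 := by nlinarith
  nlinarith

lemma key_est (z : ℂ) (hx : 8 ≤ z.re) (hy : |z.im| ≤ 1) :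
    Real.exp z.re / 8 ≤ ‖Complex.sinh z + Complex.sin z‖ ∧
    ‖Complex.cos z‖ ≤ 3 ∧
    ‖Complex.cosh z‖ ≤ Real.exp z.re := by
  set x := z.re with hxdef
  set y := z.im with hydef
  have hx0 : (0:ℝ) ≤ x := by linarith
  have hexp3 : Real.exp 1 ≤ 3 := by
    have := Real.exp_one_lt_d9; linarith
  have hey : Real.exp y ≤ 3 := by
    have : Real.exp y ≤ Real.exp 1 := Real.exp_le_exp.2 (by cases' abs_le.1 hy with h1 h2; linarith)
    linarith
  have heny : Real.exp (-y) ≤ 3 := by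
    have : Real.exp (-y) ≤ Real.exp 1 := Real.exp_le_exp.2 (by cases' abs_le.1 hy with h1 h2; linarith)
    linarith
  have hizre : (z * I).re = -y := by simp [hydef]
  have hnizre : (-z * I).re = y := by simp [hydef]
  have habs_sin : ‖Complex.sin z‖ ≤ 3 := by
    rw [Complex.sin]
    calc ‖(Complex.exp (-z * I) - Complex.exp (z * I)) * I / 2‖
        ≤ (‖Complex.exp (-z * I)‖ + ‖Complex.exp (z * I)‖) / 2 := by
          rw [norm_div, norm_mul, Complex.norm_I, mul_one, Complex.norm_two]
          gcongr
          exact (norm_sub_le _ _)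
      _ = (Real.exp y + Real.exp (-y)) / 2 := by rw [Complex.norm_exp, Complex.norm_exp, hizre, hnizre]
      _ ≤ 3 := by linarith
  have habs_cos : ‖Complex.cos z‖ ≤ 3 := by
    rw [Complex.cos]
    calc ‖(Complex.exp (z * I) + Complex.exp (-z * I)) / 2‖
        ≤ (‖Complex.exp (z * I)‖ + ‖Complex.exp (-z * I)‖) / 2 := by
          rw [norm_div, Complex.norm_two]
          gcongr
          exact norm_add_le _ _
      _ = (Real.exp (-y) + Real.exp y) / 2 := by rw [Complex.norm_exp, Complex.norm_exp, hizre, hnizre]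
      _ ≤ 3 := by linarith
  have habs_cosh : ‖Complex.cosh z‖ ≤ Real.exp x := by
    rw [Complex.cosh]
    calc ‖(Complex.exp z + Complex.exp (-z)) / 2‖
        ≤ (‖Complex.exp z‖ + ‖Complex.exp (-z)‖) / 2 := by
          rw [norm_div, Complex.norm_two]
          gcongr
          exact norm_add_le _ _
      _ = (Real.exp x + Real.exp (-x)) / 2 := by
          rw [Complex.norm_exp, Complex.norm_exp, Complex.neg_re]
      _ ≤ Real.exp x := by
          have := Real.exp_le_exp.2 (by linarith : -x ≤ x); linarith
  have hcosy : (1:ℝ)/2 ≤ Real.cos y := by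
    have h1 := Real.one_sub_sq_div_two_le_cos (x := y)
    have h2 : y^2 ≤ 1 := by
      have := abs_le.1 hy; nlinarith
    linarith
  have hsinh_re : (Complex.sinh z).re = (Real.exp x - Real.exp (-x)) * Real.cos y / 2 := by
    rw [Complex.sinh]
    simp [Complex.exp_re, Complex.div_re, Complex.normSq, Real.cos_neg]
    ring
  have hex : (26:ℝ) ≤ Real.exp x := le_trans exp_eight_ge (Real.exp_le_exp.2 hx)
  have henx : Real.exp (-x) ≤ 1 := Real.exp_le_one_iff.2 (by linarith)
  have hD : Real.exp x / 8 ≤ ‖Complex.sinh z + Complex.sin z‖ := by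
    have h1 : (Complex.sinh z + Complex.sin z).re ≤ ‖Complex.sinh z + Complex.sin z‖ :=
      Complex.re_le_norm _
    have h2 : -(3:ℝ) ≤ (Complex.sin z).re := by
      have := abs_le.1 (le_trans (Complex.abs_re_le_norm _) habs_sin)
      exact this.1
    have h3 : Real.exp x / 4 - 1/4 ≤ (Complex.sinh z).re := by
      rw [hsinh_re]
      have hc1 : Real.cos y ≤ 1 := Real.cos_le_one y
      have hpos : (0:ℝ) ≤ Real.exp x - Real.exp (-x) := by linarith
      nlinarith
    have h4 : (Complex.sinh z + Complex.sin z).re = (Complex.sinh z).re + (Complex.sin z).re :=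
      Complex.add_re _ _
    linarith
  exact ⟨hD, habs_cos, habs_cosh⟩


set_option maxHeartbeats 1600000 in
/-- For large `ω`, `sinh(α(ω)) + sin(α(ω)) ≠ 0` and both
`|cos(α(ω))/(sinh(α(ω)) + sin(α(ω)))|` and `|cosh(α(ω))/(sinh(α(ω)) + sin(α(ω)))|`
are uniformly bounded. -/
theorem cos_cosh_div_sinh_add_sin_bounded
    (β κ γ : ℝ) (hβ : 0 < β) (hκ : 0 < κ) (hγ : 0 < γ) :
    ∃ ω₀ > (0:ℝ), ∃ M > (0:ℝ), ∀ ω : ℝ, ω₀ ≤ ω →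
      Complex.sinh (alphaWN β κ γ ω) + Complex.sin (alphaWN β κ γ ω) ≠ 0 ∧
      ‖Complex.cos (alphaWN β κ γ ω) /
          (Complex.sinh (alphaWN β κ γ ω) + Complex.sin (alphaWN β κ γ ω))‖ ≤ M ∧
      ‖Complex.cosh (alphaWN β κ γ ω) /
          (Complex.sinh (alphaWN β κ γ ω) + Complex.sin (alphaWN β κ γ ω))‖ ≤ M := by
  refine ⟨(1:ℝ) + ((β/κ) ^ ((1:ℝ)/4)*γ/β)^2 + (16/(β/κ) ^ ((1:ℝ)/4))^2, ?_, 24, by norm_num, ?_⟩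
  · have hc : 0 < (β/κ) ^ ((1:ℝ)/4) := Real.rpow_pos_of_pos (div_pos hβ hκ) _
    positivity
  intro ω hω
  set c : ℝ := (β/κ) ^ ((1:ℝ)/4) with hcdef
  clear_value c
  have hc : 0 < c := by rw [hcdef]; exact Real.rpow_pos_of_pos (div_pos hβ hκ) _
  have hω1 : (1:ℝ) ≤ ω := by nlinarith [sq_nonneg (c*γ/β), sq_nonneg (16/c)]
  have hω0 : (0:ℝ) < ω := by linarith
  have hsq1 : c*γ/β ≤ Real.sqrt ω := by
    have h : (c*γ/β)^2 ≤ ω := by nlinarith [sq_nonneg (16/c)]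
    calc c*γ/β = Real.sqrt ((c*γ/β)^2) := (Real.sqrt_sq (by positivity)).symm
      _ ≤ Real.sqrt ω := Real.sqrt_le_sqrt h
  have hsq2 : 16/c ≤ Real.sqrt ω := by
    have h : (16/c)^2 ≤ ω := by nlinarith [sq_nonneg (c*γ/β)]
    calc 16/c = Real.sqrt ((16/c)^2) := (Real.sqrt_sq (by positivity)).symm
      _ ≤ Real.sqrt ω := Real.sqrt_le_sqrt h
  have hs0 : 0 < Real.sqrt ω := Real.sqrt_pos.2 hω0
  set z : ℂ := (ω:ℂ)^2 - Complex.I * ((γ:ℂ)/(β:ℂ)) * (ω:ℂ) with hzdef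
  clear_value z
  have hz' : z = (ω:ℂ)^2 - Complex.I * ((γ/β:ℝ):ℂ) * (ω:ℂ) := by
    rw [hzdef, Complex.ofReal_div]
  have hzre : z.re = ω^2 := by rw [hz']; simp [← Complex.ofReal_pow]
  have hzim : z.im = -(γ/β*ω) := by rw [hz']; simp [← Complex.ofReal_pow]
  set a := ‖z‖ with hadef
  clear_value a
  have hza : ω^2 ≤ a := by
    have h := Complex.abs_re_le_norm z
    rwa [hzre, _root_.abs_of_nonneg (sq_nonneg ω), ← hadef] at h
  have ha0 : 0 < a := lt_of_lt_of_le (by positivity) hza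
  set θ := Complex.arg z with hθdef
  clear_value θ
  have hθ2 : |θ| ≤ π/2 := by rw [hθdef]; exact Complex.abs_arg_le_pi_div_two_iff.2 (by rw [hzre]; positivity)
  have hsinθ : Real.sin θ = z.im / a := by rw [hθdef, hadef]; exact Complex.sin_arg z
  have hθle : |θ| ≤ (π/2) * ((γ/β*ω)/a) := by
    have h1 := Real.mul_abs_le_abs_sin hθ2
    have h2 : |Real.sin θ| = (γ/β*ω)/a := by
      rw [hsinθ, hzim, abs_div, abs_neg, _root_.abs_of_nonneg (by positivity : (0:ℝ) ≤ γ/β*ω),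
        _root_.abs_of_pos ha0]
    have hπ : 0 < π := Real.pi_pos
    calc |θ| = (π/2) * (2/π * |θ|) := by field_simp
      _ ≤ (π/2) * |Real.sin θ| := by gcongr
      _ = (π/2) * ((γ/β*ω)/a) := by rw [h2]
  -- alpha components
  have h14 : (1/4:ℂ) = ((1/4:ℝ):ℂ) := by norm_num
  have hα : alphaWN β κ γ ω = (c:ℂ) * Complex.exp (((1/4:ℝ):ℂ) * Complex.log z) := by
    rw [alphaWN, ← h14, ← hcdef, hzdef]
  set w : ℂ := ((1/4:ℝ):ℂ) * Complex.log z with hwdef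
  clear_value w
  have hwre : w.re = (1/4) * Real.log a := by
    rw [hwdef]
    simp [Complex.mul_re, Complex.log_re, hadef]
  have hwim : w.im = θ/4 := by
    rw [hwdef]
    simp [Complex.mul_im, Complex.log_im, hθdef]
    ring
  set r := a ^ ((1:ℝ)/4) with hrdef
  clear_value r
  have hr0 : 0 < r := by rw [hrdef]; exact Real.rpow_pos_of_pos ha0 _
  have hrexp : Real.exp w.re = r := by
    rw [hwre, hrdef, Real.rpow_def_of_pos ha0]
    ring_nf
  have hαre : (alphaWN β κ γ ω).re = c * (r * Real.cos (θ/4)) := by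
    rw [hα]
    simp only [Complex.mul_re, Complex.ofReal_re, Complex.ofReal_im, Complex.exp_re,
      Complex.exp_im, hrexp, hwim]
    ring
  have hαim : (alphaWN β κ γ ω).im = c * (r * Real.sin (θ/4)) := by
    rw [hα]
    simp only [Complex.mul_im, Complex.ofReal_re, Complex.ofReal_im, Complex.exp_re,
      Complex.exp_im, hrexp, hwim]
    ring
  have hsqr : Real.sqrt ω ≤ r := by
    have h1 : ((ω^2:ℝ)) ^ ((1:ℝ)/4) ≤ a ^ ((1:ℝ)/4) :=
      Real.rpow_le_rpow (by positivity) hza (by norm_num)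
    have h2 : ((ω^2:ℝ)) ^ ((1:ℝ)/4) = Real.sqrt ω := by
      rw [← Real.rpow_natCast ω 2, ← Real.rpow_mul hω0.le, Real.sqrt_eq_rpow]
      norm_num
    rw [hrdef, ← h2]
    exact h1
  have hkey : r * ω / a ≤ 1 / Real.sqrt ω := by
    have h1 : r / a = a ^ ((1:ℝ)/4 - 1) := by
      rw [hrdef, Real.rpow_sub ha0, Real.rpow_one]
    have h2 : a ^ ((1:ℝ)/4 - 1) ≤ ((ω^2:ℝ)) ^ ((1:ℝ)/4 - 1) :=
      Real.rpow_le_rpow_of_nonpos (by positivity) hza (by norm_num)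
    have h3 : ((ω^2:ℝ)) ^ ((1:ℝ)/4 - 1) * ω = 1 / Real.sqrt ω := by
      have e1 : ((ω^2:ℝ)) ^ ((1:ℝ)/4 - 1) = ω ^ (-(3/2):ℝ) := by
        rw [← Real.rpow_natCast ω 2, ← Real.rpow_mul hω0.le]
        norm_num
      rw [e1, show (-(3/2):ℝ) = -(1/2) + -1 by norm_num, Real.rpow_add hω0,
        Real.rpow_neg_one, Real.rpow_neg hω0.le, ← Real.sqrt_eq_rpow]
      field_simp
    calc r * ω / a = (r / a) * ω := by ring
      _ ≤ ((ω^2:ℝ)) ^ ((1:ℝ)/4 - 1) * ω := by rw [h1]; gcongr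
      _ = 1 / Real.sqrt ω := h3
  have hθ4 : |θ/4| ≤ (π/8) * ((γ/β*ω)/a) := by
    rw [abs_div, Nat.abs_ofNat]
    linarith [hθle]
  have him : |(alphaWN β κ γ ω).im| ≤ 1 := by
    rw [hαim, abs_mul, abs_mul, _root_.abs_of_pos hc, _root_.abs_of_pos hr0]
    have hπ4 : π ≤ 4 := Real.pi_le_four
    calc c * (r * |Real.sin (θ/4)|)
        ≤ c * (r * ((π/8) * ((γ/β*ω)/a))) := by
          gcongr
          exact le_trans Real.abs_sin_le_abs hθ4
      _ = c * (π/8) * (γ/β) * (r * ω / a) := by ring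
      _ ≤ c * (π/8) * (γ/β) * (1 / Real.sqrt ω) := by gcongr
      _ = (c * (π/8) * (γ/β)) / Real.sqrt ω := by ring
      _ ≤ Real.sqrt ω / Real.sqrt ω := by
          gcongr
          have h := mul_le_mul_of_nonneg_right hsq1 (by positivity : (0:ℝ) ≤ π/8)
          have h8 : Real.sqrt ω * (π/8) ≤ Real.sqrt ω := by nlinarith [hπ4, hs0]
          calc c*(π/8)*(γ/β) = c*γ/β*(π/8) := by ring
            _ ≤ Real.sqrt ω*(π/8) := h
            _ ≤ Real.sqrt ω := h8
      _ = 1 := div_self (ne_of_gt hs0)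
  have hcos4 : (1:ℝ)/2 ≤ Real.cos (θ/4) := by
    have h := Real.one_sub_sq_div_two_le_cos (x := θ/4)
    have hπ4 : π ≤ 4 := Real.pi_le_four
    have habs : |θ/4| ≤ 1/2 := by
      rw [abs_div, Nat.abs_ofNat]
      linarith [hθ2]
    have h2 := abs_le.1 habs
    nlinarith [h2.1, h2.2]
  have hxre : 8 ≤ (alphaWN β κ γ ω).re := by
    rw [hαre]
    have h1 : Real.sqrt ω * (1/2) ≤ r * Real.cos (θ/4) :=
      mul_le_mul hsqr hcos4 (by norm_num) hr0.le
    have h2 : 16 ≤ c * Real.sqrt ω := by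
      have h := mul_le_mul_of_nonneg_left hsq2 hc.le
      rw [show c * (16/c) = 16 by field_simp] at h
      exact h
    nlinarith [mul_le_mul_of_nonneg_left h1 hc.le]
  obtain ⟨hD, hcos3, hcoshE⟩ := key_est (alphaWN β κ γ ω) hxre him
  set x := (alphaWN β κ γ ω).re with hxdef
  have hDpos : 0 < ‖Complex.sinh (alphaWN β κ γ ω) + Complex.sin (alphaWN β κ γ ω)‖ :=
    lt_of_lt_of_le (by positivity) hD
  have hSne : Complex.sinh (alphaWN β κ γ ω) + Complex.sin (alphaWN β κ γ ω) ≠ 0 := by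
    intro h
    rw [h] at hDpos
    simp at hDpos
  have hex1 : (1:ℝ) ≤ Real.exp x := Real.one_le_exp (by linarith)
  have hexpos : (0:ℝ) < Real.exp x := Real.exp_pos _
  refine ⟨hSne, ?_, ?_⟩
  · rw [norm_div]
    calc ‖Complex.cos (alphaWN β κ γ ω)‖ /
          ‖Complex.sinh (alphaWN β κ γ ω) + Complex.sin (alphaWN β κ γ ω)‖
        ≤ 3 / (Real.exp x / 8) := div_le_div₀ (by norm_num) hcos3 (by positivity) hD
      _ = 24 / Real.exp x := by field_simp; ring
      _ ≤ 24 := div_le_self (by norm_num) hex1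
  · rw [norm_div]
    calc ‖Complex.cosh (alphaWN β κ γ ω)‖ /
          ‖Complex.sinh (alphaWN β κ γ ω) + Complex.sin (alphaWN β κ γ ω)‖
        ≤ Real.exp x / (Real.exp x / 8) := div_le_div₀ hexpos.le hcoshE (by positivity) hD
      _ = 8 := by field_simp
      _ ≤ 24 := by norm_num
end

section
/- Let β, κ, γ > 0 and for ω > 0 let α(ω) = (β/κ)^{1/4}·(ω² − i(γ/β)ω)^{1/4} ∈ ℂ, where z^{1/4} = exp((1/4)·Log z) denotes the principal fourth root. Then there exist ω₀ > 0 and M > 0 such that for all ω ≥ ω₀: cos(α(ω)) ≠ 0 and |tan(α(ω))| ≤ M·√ω. -/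
open Real Complex

private lemma my_arctan_le_self {t : ℝ} (ht : 0 ≤ t) : Real.arctan t ≤ t := by
  have h0 : (0:ℝ) ≤ Real.arctan t := by
    rw [← Real.arctan_zero]
    exact Real.arctan_strictMono.monotone ht
  have h := Real.le_tan h0 (Real.arctan_lt_pi_div_two t)
  rwa [Real.tan_arctan] at h

private lemma my_half_le_arctan {t : ℝ} (h0 : 0 ≤ t) (h1 : t ≤ 1) :
    t / 2 ≤ Real.arctan t := by
  rw [Real.arctan_eq_arcsin]
  have hsp : 0 < Real.sqrt (1 + t ^ 2) := Real.sqrt_pos.mpr (by nlinarith)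
  have hs2 : Real.sqrt (1 + t ^ 2) ≤ 2 := by
    rw [show (2:ℝ) = Real.sqrt 4 by
      rw [show (4:ℝ) = 2 ^ 2 by norm_num, Real.sqrt_sq (by norm_num : (0:ℝ) ≤ 2)]]
    exact Real.sqrt_le_sqrt (by nlinarith)
  have hs1 : 1 ≤ Real.sqrt (1 + t ^ 2) := by
    have h := Real.sqrt_le_sqrt (show (1:ℝ) ≤ 1 + t ^ 2 by nlinarith)
    rwa [Real.sqrt_one] at h
  set u := t / Real.sqrt (1 + t ^ 2) with hu
  have hu0 : 0 ≤ u := div_nonneg h0 hsp.le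
  have hu1 : u ≤ 1 := by
    rw [hu, div_le_one hsp]; linarith
  have h2 : u ≤ Real.arcsin u := by
    conv_lhs => rw [← Real.sin_arcsin (by linarith) hu1]
    exact Real.sin_le (Real.arcsin_nonneg.mpr hu0)
  have h3 : t / 2 ≤ u := by
    rw [hu]
    exact div_le_div_of_nonneg_left h0 hsp hs2
  linarith

private lemma cos_tan_bound (u : ℂ) (h0 : u.im ≠ 0) (h1 : |u.im| ≤ 1) :
    Complex.cos u ≠ 0 ∧ ‖Complex.tan u‖ ≤ 2 / |u.im| := by
  set a := Real.cos u.re with ha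
  set b := Real.sin u.re with hb
  set ch := Real.cosh u.im with hch
  set sh := Real.sinh u.im with hsh
  have hsinh : |u.im| ≤ |sh| := by
    rw [hsh, Real.abs_sinh]
    exact Real.self_le_sinh_iff.mpr (abs_nonneg _)
  have hch_pos : 0 < ch := Real.cosh_pos _
  have hcosh : ch ≤ 2 := by
    have h2 : ch ≤ Real.cosh 1 := by
      rw [hch, Real.cosh_le_cosh]; simpa using h1
    have h3 : Real.cosh 1 < 2 := by
      rw [Real.cosh_eq]
      have := Real.exp_one_lt_d9
      have h4 : Real.exp (-1) < 1 := Real.exp_lt_one_iff.mpr (by norm_num)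
      nlinarith
    linarith
  have hcos_eq : Complex.cos u = ((a * ch : ℝ) : ℂ) - ((b * sh : ℝ) : ℂ) * Complex.I := by
    rw [Complex.cos_eq, ha, hb, hch, hsh]; push_cast; ring
  have hsin_eq : Complex.sin u = ((b * ch : ℝ) : ℂ) + ((a * sh : ℝ) : ℂ) * Complex.I := by
    rw [Complex.sin_eq, ha, hb, hch, hsh]; push_cast; ring
  have hpyth : b ^ 2 + a ^ 2 = 1 := Real.sin_sq_add_cos_sq _
  have hcsq : ch ^ 2 = sh ^ 2 + 1 := Real.cosh_sq _
  have habs_cos_sq : (‖Complex.cos u‖) ^ 2 = a ^ 2 + sh ^ 2 := by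
    rw [Complex.sq_norm, hcos_eq]
    simp [Complex.normSq_apply]
    ring_nf
    nlinarith [hpyth, hcsq]
  have habs_sin_sq : (‖Complex.sin u‖) ^ 2 = b ^ 2 + sh ^ 2 := by
    rw [Complex.sq_norm, hsin_eq]
    simp [Complex.normSq_apply]
    ring_nf
    nlinarith [hpyth, hcsq]
  have hcos_lb : |u.im| ≤ ‖Complex.cos u‖ := by
    have h2 : |u.im| ^ 2 ≤ (‖Complex.cos u‖) ^ 2 := by
      rw [habs_cos_sq]
      have h5 := mul_self_le_mul_self (abs_nonneg u.im) hsinh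
      have h6 : |sh| * |sh| = sh ^ 2 := by rw [← _root_.abs_mul, abs_mul_self]; ring
      nlinarith [sq_nonneg a]
    have h3 := Real.sqrt_le_sqrt h2
    rwa [Real.sqrt_sq (abs_nonneg _), Real.sqrt_sq (norm_nonneg _)] at h3
  have him_pos : 0 < |u.im| := abs_pos.mpr h0
  have hcos_ne : Complex.cos u ≠ 0 := by
    intro h
    rw [h] at hcos_lb
    simp at hcos_lb
    exact h0 hcos_lb
  refine ⟨hcos_ne, ?_⟩
  have hsin_ub : ‖Complex.sin u‖ ≤ 2 := by
    have h2 : (‖Complex.sin u‖) ^ 2 ≤ 2 ^ 2 := by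
      rw [habs_sin_sq]
      nlinarith [sq_nonneg a]
    nlinarith [norm_nonneg (Complex.sin u)]
  rw [Complex.tan_eq_sin_div_cos, norm_div]
  exact div_le_div₀ (by norm_num) hsin_ub him_pos hcos_lb

set_option maxHeartbeats 1600000 in
/-- For large `ω`, `cos(α(ω)) ≠ 0` and `|tan(α(ω))| ≤ M√ω`. -/
theorem tan_alphaWN_bound (β κ γ : ℝ) (hβ : 0 < β) (hκ : 0 < κ) (hγ : 0 < γ) :
    ∃ ω₀ > (0:ℝ), ∃ M > (0:ℝ), ∀ ω : ℝ, ω₀ ≤ ω →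
      Complex.cos (alphaWN β κ γ ω) ≠ 0 ∧
      ‖Complex.tan (alphaWN β κ γ ω)‖ ≤ M * Real.sqrt ω := by
  obtain ⟨c, hc⟩ : ∃ c : ℝ, c = (β / κ) ^ ((1:ℝ)/4) := ⟨_, rfl⟩
  have hc0 : 0 < c := hc ▸ Real.rpow_pos_of_pos (div_pos hβ hκ) _
  have hγβ : 0 < γ/β := div_pos hγ hβ
  refine ⟨1 + γ/β + (c*γ/β)^2, by positivity, 32*β/(c*γ), by positivity, fun ω hω => ?_⟩
  -- basic facts about ω
  have hsq : 0 ≤ (c*γ/β)^2 := sq_nonneg _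
  have hω1 : 1 ≤ ω := by linarith
  have hω0 : 0 < ω := by linarith
  have hωt : γ/β ≤ ω := by linarith
  have hωc : (c*γ/β)^2 ≤ ω := by linarith
  obtain ⟨w, hw⟩ : ∃ w : ℝ, w = Real.sqrt ω := ⟨_, rfl⟩
  have hw2 : w^2 = ω := by rw [hw]; exact Real.sq_sqrt hω0.le
  have hw0 : 0 < w := hw ▸ Real.sqrt_pos.mpr hω0
  obtain ⟨t, htdef⟩ : ∃ t : ℝ, t = γ/(β*ω) := ⟨_, rfl⟩
  have ht0 : 0 < t := htdef ▸ by positivity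
  have ht1 : t ≤ 1 := by
    rw [htdef, div_le_one (by positivity)]
    calc γ = (γ/β) * β := by field_simp
    _ ≤ ω * β := by nlinarith
    _ = β * ω := by ring
  obtain ⟨z, hz⟩ : ∃ z : ℂ, z = (ω:ℂ) ^ 2 - Complex.I * ((γ:ℂ) / (β:ℂ)) * (ω:ℂ) := ⟨_, rfl⟩
  have hz_re : z.re = ω^2 := by
    simp [hz, Complex.mul_re, Complex.mul_im, pow_two]
  have hz_im : z.im = -(γ/β*ω) := by
    simp [hz, Complex.mul_re, Complex.mul_im, pow_two]
  have hz_re_pos : 0 < z.re := by rw [hz_re]; positivity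
  have hz0 : z ≠ 0 := fun h => by rw [h] at hz_re_pos; simp at hz_re_pos
  have habs_pos : 0 < ‖z‖ := norm_pos_iff.mpr hz0
  have habs_lb : ω^2 ≤ ‖z‖ := by
    calc ω^2 = z.re := hz_re.symm
    _ ≤ |z.re| := le_abs_self _
    _ ≤ ‖z‖ := Complex.abs_re_le_norm z
  have habs_ub : ‖z‖ ≤ 2*ω^2 := by
    calc ‖z‖ ≤ |z.re| + |z.im| := Complex.norm_le_abs_re_add_abs_im z
    _ = ω^2 + γ/β*ω := by
        rw [hz_re, hz_im, abs_of_pos (by positivity : (0:ℝ) < ω^2), abs_neg,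
          abs_of_pos (by positivity)]
    _ ≤ 2*ω^2 := by nlinarith
  -- the argument of z
  obtain ⟨θ, hθdef⟩ : ∃ θ : ℝ, θ = Real.arctan t := ⟨_, rfl⟩
  have harg : z.arg = -θ := by
    have h2 : |z.arg| < π/2 := Complex.abs_arg_lt_pi_div_two_iff.mpr (Or.inl hz_re_pos)
    have h3 : Real.arctan (Real.tan z.arg) = z.arg :=
      Real.arctan_tan (by cases abs_lt.mp h2; linarith) (abs_lt.mp h2).2
    rw [← h3, Complex.tan_arg, hz_re, hz_im]
    rw [show -(γ/β*ω)/ω^2 = -t by rw [htdef]; field_simp]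
    rw [Real.arctan_neg t, hθdef]
  -- the imaginary part of alphaWN
  obtain ⟨r, hrdef⟩ : ∃ r : ℝ, r = Real.exp (Real.log (‖z‖) * (1/4)) := ⟨_, rfl⟩
  have hr0 : 0 < r := hrdef ▸ Real.exp_pos _
  obtain ⟨sn, hsdef⟩ : ∃ sn : ℝ, sn = Real.sin (θ/4) := ⟨_, rfl⟩
  have him : (alphaWN β κ γ ω).im = -(c * r * sn) := by
    have e1 : alphaWN β κ γ ω = (c:ℂ) * Complex.exp (((1/4:ℝ):ℂ) * Complex.log z) := by
      rw [alphaWN, ← hc, ← hz]; norm_num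
    rw [e1, Complex.im_ofReal_mul, Complex.exp_im]
    have e2 : (((1/4:ℝ):ℂ) * Complex.log z).re = Real.log (‖z‖) * (1/4) := by
      rw [Complex.re_ofReal_mul, Complex.log_re]; ring
    have e3 : (((1/4:ℝ):ℂ) * Complex.log z).im = -(θ/4) := by
      rw [Complex.im_ofReal_mul, Complex.log_im, harg]; ring
    rw [e2, e3, Real.sin_neg, ← hrdef, ← hsdef]; ring
  -- bounds on r
  have hr_eq : r = (‖z‖) ^ ((1:ℝ)/4) := by
    rw [hrdef]; exact (Real.rpow_def_of_pos habs_pos _).symm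
  have hsq_rpow : ∀ x : ℝ, 0 ≤ x → (x^2 : ℝ) ^ ((1:ℝ)/4) = Real.sqrt x := by
    intro x hx
    rw [← Real.rpow_natCast x 2, ← Real.rpow_mul hx, Real.sqrt_eq_rpow]
    norm_num
  have hr_lb : w ≤ r := by
    rw [hr_eq, hw, ← hsq_rpow ω hω0.le]
    exact Real.rpow_le_rpow (by positivity) habs_lb (by norm_num)
  have hr_ub : r ≤ 2*w := by
    have h2 : r ≤ (2*ω^2 : ℝ) ^ ((1:ℝ)/4) := by
      rw [hr_eq]
      exact Real.rpow_le_rpow habs_pos.le habs_ub (by norm_num)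
    have h3 : (2*ω^2 : ℝ) ^ ((1:ℝ)/4) = (2:ℝ)^((1:ℝ)/4) * w := by
      rw [Real.mul_rpow (by norm_num) (by positivity), hsq_rpow ω hω0.le, hw]
    have h4 : (2:ℝ)^((1:ℝ)/4) ≤ 2 := by
      calc (2:ℝ)^((1:ℝ)/4) ≤ (2:ℝ)^(1:ℝ) :=
        Real.rpow_le_rpow_of_exponent_le (by norm_num) (by norm_num)
      _ = 2 := Real.rpow_one 2
    rw [h3] at h2
    nlinarith
  -- bounds on θ and sin(θ/4)
  have hθ0 : 0 < θ := by
    rw [hθdef, ← Real.arctan_zero]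
    exact Real.arctan_strictMono ht0
  have hθub : θ ≤ t := hθdef ▸ my_arctan_le_self ht0.le
  have hθlb : t/2 ≤ θ := hθdef ▸ my_half_le_arctan ht0.le ht1
  have hθpi : θ < π/2 := hθdef ▸ Real.arctan_lt_pi_div_two t
  have hs_ub : sn ≤ t/4 := by
    rw [hsdef]
    calc Real.sin (θ/4) ≤ θ/4 := Real.sin_le (by linarith)
    _ ≤ t/4 := by linarith
  have hs_lb : t/16 ≤ sn := by
    have h2 : 2/π * (θ/4) < Real.sin (θ/4) :=
      Real.mul_lt_sin (by linarith) (by linarith [Real.pi_pos])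
    have h3 : (1:ℝ)/2 ≤ 2/π := by
      rw [le_div_iff₀ Real.pi_pos]
      linarith [Real.pi_le_four]
    have h4 : (1/2)*(θ/4) ≤ (2/π)*(θ/4) := mul_le_mul_of_nonneg_right h3 (by linarith)
    rw [hsdef]
    linarith
  -- conclude
  have hwt : w * t = γ/(β*w) := by
    rw [htdef, ← hw2]
    field_simp
  have hcrs_lb : c*γ/(16*(β*w)) ≤ c*r*sn := by
    have h2 : c*w*(t/16) ≤ c*r*sn := by
      apply mul_le_mul (by nlinarith) hs_lb (by positivity) (by positivity)
    calc c*γ/(16*(β*w)) = c*(w*t)/16 := by rw [hwt]; field_simp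
    _ = c*w*(t/16) := by ring
    _ ≤ c*r*sn := h2
  have hcrs_ub : c*r*sn ≤ 1 := by
    have h2 : c*r*sn ≤ c*(2*w)*(t/4) := by
      apply mul_le_mul (by nlinarith) hs_ub (by nlinarith) (by positivity)
    have h3 : c*(2*w)*(t/4) = c*γ/(2*(β*w)) := by
      rw [show c*(2*w)*(t/4) = c*(w*t)/2 by ring, hwt]; field_simp
    have h4 : c*γ/(2*(β*w)) ≤ 1 := by
      rw [div_le_one (by positivity)]
      have h5 : c*γ/β ≤ w := by
        have h6 := Real.sqrt_le_sqrt hωc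
        rwa [Real.sqrt_sq (by positivity), ← hw] at h6
      calc c*γ = (c*γ/β)*β := by field_simp
      _ ≤ w*β := by nlinarith
      _ ≤ 2*(β*w) := by nlinarith
    linarith
  have hcrs_pos : 0 < c*r*sn := lt_of_lt_of_le (by positivity) hcrs_lb
  have hy_ne : (alphaWN β κ γ ω).im ≠ 0 := by
    rw [him, neg_ne_zero]; exact hcrs_pos.ne'
  have hy_abs : |(alphaWN β κ γ ω).im| = c*r*sn := by
    rw [him, abs_neg, abs_of_pos hcrs_pos]
  have hy1 : |(alphaWN β κ γ ω).im| ≤ 1 := by rw [hy_abs]; exact hcrs_ub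
  obtain ⟨h1, h2⟩ := cos_tan_bound (alphaWN β κ γ ω) hy_ne hy1
  refine ⟨h1, h2.trans ?_⟩
  rw [hy_abs, ← hw]
  have hlb_pos : (0:ℝ) < c*γ/(16*(β*w)) := by positivity
  calc (2:ℝ) / (c*r*sn) ≤ 2 / (c*γ/(16*(β*w))) :=
        div_le_div_of_nonneg_left (by norm_num) hlb_pos hcrs_lb
  _ = 32*β/(c*γ) * w := by field_simp; ring
end
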